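/- arXiv:1008.4233 — 5 statements merged into one kernel-verified Lean document; each statement's English description precedes it below -/
import Mathlib

section
/- Let f : ℝ → ℝ be γ-Hölder on [0,T] with constant C > 0 (γ ∈ (0,1], T > 0), let p > 0 satisfy pγ > 1, and let X := f + J, where J is the jump part with jump sizes c_1,…,c_r and distinct jump times τ_1,…,τ_r ∈ (0,T). Then the δ-step p-variation of X converges to the sum of p-th powers of the jump sizes: lim_{δ→0+} B(X,p,δ,T) = ∑_{m=1}^{r} |c_m|^p. -/
open Finset Filter

private lemma ceil_char {δ x : ℝ} (hδ : 0 < δ) {k : ℕ} (hk : 1 ≤ k) :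
    ⌈x / δ⌉₊ = k ↔ ((k : ℝ) - 1) * δ < x ∧ x ≤ (k : ℝ) * δ := by
  constructor
  · rintro rfl
    refine ⟨?_, (div_le_iff₀ hδ).mp (Nat.le_ceil _)⟩
    have h1 : (⌈x / δ⌉₊ - 1 : ℕ) < ⌈x / δ⌉₊ := Nat.sub_lt hk one_pos
    have h2 : ((⌈x / δ⌉₊ - 1 : ℕ) : ℝ) < x / δ := Nat.lt_ceil.mp h1
    rw [Nat.cast_sub hk, Nat.cast_one] at h2
    exact (lt_div_iff₀ hδ).mp h2
  · rintro ⟨h1, h2⟩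
    have hle : ⌈x / δ⌉₊ ≤ k := Nat.ceil_le.mpr ((div_le_iff₀ hδ).mpr h2)
    have hge : k - 1 < ⌈x / δ⌉₊ := by
      apply Nat.lt_ceil.mpr
      rw [Nat.cast_sub hk, Nat.cast_one]
      exact (lt_div_iff₀ hδ).mpr h1
    omega

/-- The `δ`-step `p`-variation of `X : ℝ → ℝ` up to horizon `T`:
`B(X,p,δ,T) = ∑_{k=1}^{⌊T/δ⌋} |X(kδ) − X((k−1)δ)|^p`. -/
noncomputable def stepPVar (X : ℝ → ℝ) (p δ T : ℝ) : ℝ :=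
  ∑ k ∈ Finset.Icc 1 ⌊T / δ⌋₊, |X ((k : ℝ) * δ) - X (((k : ℝ) - 1) * δ)| ^ p

/-- If `f` is `γ`-Hölder on `[0,T]` with constant `C > 0`, `pγ > 1`, and
`X = f + J` where `J = ∑_m c_m · 1_{[τ_m,∞)}` is a jump part with distinct jump
times `τ_m ∈ (0,T)`, then `B(X,p,δ,T) → ∑_m |c_m|^p` as `δ → 0+`. -/
theorem pvariation_of_holder_plus_jumps
    (f : ℝ → ℝ) (γ C T p : ℝ) (hγ0 : 0 < γ) (hγ1 : γ ≤ 1) (hC : 0 < C)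
    (hT : 0 < T) (hp : 0 < p) (hpγ : 1 < p * γ)
    (hf : ∀ s ∈ Set.Icc (0 : ℝ) T, ∀ t ∈ Set.Icc (0 : ℝ) T,
      |f s - f t| ≤ C * |s - t| ^ γ)
    (r : ℕ) (c τ : Fin r → ℝ) (hτinj : Function.Injective τ)
    (hτmem : ∀ m, τ m ∈ Set.Ioo (0 : ℝ) T)
    (X : ℝ → ℝ) (hX : X = fun t => f t + ∑ m, if τ m ≤ t then c m else 0) :
    Tendsto (fun δ : ℝ => stepPVar X p δ T) (nhdsWithin 0 (Set.Ioi 0))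
      (nhds (∑ m, |c m| ^ p)) := by
  subst hX
  set K : Fin r → ℝ → ℕ := fun m δ => ⌈τ m / δ⌉₊ with hKdef
  set g : ℝ → ℝ := fun δ =>
    ∑ m, |f ((K m δ : ℝ) * δ) - f (((K m δ : ℝ) - 1) * δ) + c m| ^ p with hg
  set err : ℝ → ℝ := fun δ => C ^ p * T * δ ^ (p * γ - 1) with herrdef
  -- eventual smallness conditions
  have hP : ∀ᶠ δ in nhdsWithin (0:ℝ) (Set.Ioi 0), 0 < δ ∧ (∀ m, δ < τ m) ∧
      (∀ m, δ ≤ T - τ m) ∧ (∀ m m', m ≠ m' → δ < |τ m - τ m'|) := by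
    refine (eventually_mem_nhdsWithin).and (((eventually_all.mpr ?_).and
      ((eventually_all.mpr ?_).and (eventually_all.mpr ?_))).filter_mono nhdsWithin_le_nhds)
    · exact fun m => eventually_lt_nhds (hτmem m).1
    · exact fun m => (eventually_lt_nhds (by linarith [(hτmem m).2] : (0:ℝ) < T - τ m)).mono
        fun δ h => h.le
    · intro m
      apply eventually_all.mpr
      intro m'
      by_cases hmm : m = m'
      · exact Eventually.of_forall fun δ h => absurd hmm h
      · have : (0:ℝ) < |τ m - τ m'| := by
          rw [abs_pos, sub_ne_zero]
          exact fun h => hmm (hτinj h)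
        exact (eventually_lt_nhds this).mono fun δ h _ => h
  -- main quantitative estimate
  have hMain : ∀ᶠ δ in nhdsWithin (0:ℝ) (Set.Ioi 0),
      (∀ m, |f ((K m δ : ℝ) * δ) - f (((K m δ : ℝ) - 1) * δ)| ≤ C * δ ^ γ) ∧
      g δ ≤ stepPVar (fun t => f t + ∑ m, if τ m ≤ t then c m else 0) p δ T ∧
      stepPVar (fun t => f t + ∑ m, if τ m ≤ t then c m else 0) p δ T ≤ g δ + err δ := by
    filter_upwards [hP] with δ hδP
    obtain ⟨h0, h1, h2, h3⟩ := hδP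
    have hK1 : ∀ m, 1 ≤ K m δ := fun m => Nat.one_le_ceil_iff.mpr (div_pos (hτmem m).1 h0)
    have hchar : ∀ m, ((K m δ : ℝ) - 1) * δ < τ m ∧ τ m ≤ (K m δ : ℝ) * δ :=
      fun m => (ceil_char h0 (hK1 m)).mp rfl
    set N := ⌊T / δ⌋₊ with hN
    have hNle : (N : ℝ) ≤ T / δ := Nat.floor_le (by positivity)
    have hNδ : (N : ℝ) * δ ≤ T := by
      calc (N : ℝ) * δ ≤ T / δ * δ := by nlinarith
        _ = T := div_mul_cancel₀ T h0.ne'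
    have hKN : ∀ m, K m δ ≤ N := by
      intro m
      apply Nat.le_floor
      rw [le_div_iff₀ h0]
      have hc := (hchar m).1
      have h2m := h2 m
      nlinarith
    have hKinj : ∀ m m', K m δ = K m' δ → m = m' := by
      intro m m' h
      by_contra hne
      have hd := h3 m m' hne
      have c1 := hchar m
      have c2 := hchar m'
      rw [h] at c1
      have : |τ m - τ m'| < δ := by
        rw [abs_sub_lt_iff]
        constructor <;> nlinarith [c1.1, c1.2, c2.1, c2.2]
      linarith
    have hgrid : ∀ k : ℕ, k ∈ Finset.Icc 1 N →
        |f ((k:ℝ) * δ) - f (((k:ℝ) - 1) * δ)| ≤ C * δ ^ γ := by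
      intro k hk
      rw [Finset.mem_Icc] at hk
      have hk1 : (1:ℝ) ≤ (k:ℝ) := by exact_mod_cast hk.1
      have hkN : ((k:ℝ)) * δ ≤ T := by
        have : (k:ℝ) ≤ N := by exact_mod_cast hk.2
        nlinarith
      have hs : (k:ℝ) * δ ∈ Set.Icc (0:ℝ) T := ⟨by positivity, hkN⟩
      have ht : ((k:ℝ) - 1) * δ ∈ Set.Icc (0:ℝ) T := ⟨by nlinarith, by nlinarith⟩
      have hb := hf _ hs _ ht
      have he : (k:ℝ) * δ - ((k:ℝ) - 1) * δ = δ := by ring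
      rwa [he, abs_of_pos h0] at hb
    have hjump : ∀ k : ℕ, 1 ≤ k → ∀ m : Fin r,
        ((if τ m ≤ (k:ℝ) * δ then c m else 0) -
          (if τ m ≤ ((k:ℝ) - 1) * δ then c m else 0)) =
        if K m δ = k then c m else 0 := by
      intro k hk m
      by_cases hmk : K m δ = k
      · obtain ⟨hlt, hle⟩ := (ceil_char h0 hk).mp hmk
        rw [if_pos hle, if_neg (not_le.mpr hlt), if_pos hmk, sub_zero]
      · rw [if_neg hmk]
        by_cases hb : τ m ≤ ((k:ℝ) - 1) * δ
        · have : τ m ≤ (k:ℝ) * δ := le_trans hb (by nlinarith)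
          rw [if_pos this, if_pos hb, sub_self]
        · have : ¬ τ m ≤ (k:ℝ) * δ := by
            intro ha
            exact hmk ((ceil_char h0 hk).mpr ⟨not_le.mp hb, ha⟩)
          rw [if_neg this, if_neg hb, sub_zero]
    have hincr : ∀ k : ℕ, 1 ≤ k →
        (f ((k:ℝ) * δ) + ∑ m, if τ m ≤ (k:ℝ)*δ then c m else 0) -
        (f (((k:ℝ)-1) * δ) + ∑ m, if τ m ≤ ((k:ℝ)-1)*δ then c m else 0) =
        (f ((k:ℝ) * δ) - f (((k:ℝ)-1) * δ)) + ∑ m, if K m δ = k then c m else 0 := by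
      intro k hk
      have h1' : (∑ m, if K m δ = k then c m else 0) =
          ∑ m, ((if τ m ≤ (k:ℝ)*δ then c m else 0) - (if τ m ≤ ((k:ℝ)-1)*δ then c m else 0)) :=
        (Finset.sum_congr rfl fun m _ => hjump k hk m).symm
      rw [h1', Finset.sum_sub_distrib]
      ring
    set term : ℕ → ℝ := fun k =>
      |(f ((k:ℝ) * δ) + ∑ m, if τ m ≤ (k:ℝ)*δ then c m else 0) -
        (f (((k:ℝ)-1) * δ) + ∑ m, if τ m ≤ ((k:ℝ)-1)*δ then c m else 0)| ^ p with hterm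
    have hstep : stepPVar (fun t => f t + ∑ m, if τ m ≤ t then c m else 0) p δ T =
        ∑ k ∈ Finset.Icc 1 N, term k := rfl
    set S : Finset ℕ := Finset.image (fun m => K m δ) Finset.univ with hS
    have hSsub : S ⊆ Finset.Icc 1 N := by
      intro k hkS
      rw [hS, Finset.mem_image] at hkS
      obtain ⟨m, _, rfl⟩ := hkS
      exact Finset.mem_Icc.mpr ⟨hK1 m, hKN m⟩
    have hSsum : (∑ k ∈ S, term k) = g δ := by
      rw [hS, Finset.sum_image (fun m _ m' _ h => hKinj m m' h), hg]
      apply Finset.sum_congr rfl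
      intro m _
      have hsum1 : (∑ m', if K m' δ = K m δ then c m' else 0) = c m := by
        rw [Finset.sum_eq_single_of_mem m (Finset.mem_univ m)]
        · rw [if_pos rfl]
        · intro m' _ hne
          rw [if_neg (fun h => hne (hKinj m' m h))]
      simp only [hterm]
      rw [hincr _ (hK1 m), hsum1]
    have hrest_nonneg : 0 ≤ ∑ k ∈ Finset.Icc 1 N \ S, term k :=
      Finset.sum_nonneg fun k _ => by simp only [hterm]; positivity
    have hrest_le : (∑ k ∈ Finset.Icc 1 N \ S, term k) ≤ err δ := by
      have hb : ∀ k ∈ Finset.Icc 1 N \ S, term k ≤ (C * δ ^ γ) ^ p := by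
        intro k hk
        rw [Finset.mem_sdiff] at hk
        have hk1 : 1 ≤ k := (Finset.mem_Icc.mp hk.1).1
        have hzero : ∀ m : Fin r, (if K m δ = k then c m else 0) = 0 := by
          intro m
          rw [if_neg]
          intro h
          exact hk.2 (Finset.mem_image.mpr ⟨m, Finset.mem_univ m, h⟩)
        have hterm' : term k = |f ((k:ℝ)*δ) - f (((k:ℝ)-1)*δ)| ^ p := by
          simp only [hterm]
          rw [hincr k hk1, Finset.sum_congr rfl (fun m _ => hzero m),
            Finset.sum_const_zero, add_zero]
        rw [hterm']
        exact Real.rpow_le_rpow (abs_nonneg _) (hgrid k hk.1) hp.le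
      calc (∑ k ∈ Finset.Icc 1 N \ S, term k)
          ≤ ∑ _k ∈ Finset.Icc 1 N \ S, (C*δ^γ)^p := Finset.sum_le_sum hb
        _ = (Finset.Icc 1 N \ S).card * (C*δ^γ)^p := by rw [Finset.sum_const, nsmul_eq_mul]
        _ ≤ (N : ℝ) * (C*δ^γ)^p := by
            apply mul_le_mul_of_nonneg_right _ (by positivity)
            have hcard := Finset.card_le_card
              (Finset.sdiff_subset : Finset.Icc 1 N \ S ⊆ Finset.Icc 1 N)
            rw [Nat.card_Icc] at hcard
            exact_mod_cast le_trans hcard (by omega)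
        _ ≤ (T/δ) * (C*δ^γ)^p := mul_le_mul_of_nonneg_right hNle (by positivity)
        _ = err δ := by
            have e1 : (C*δ^γ)^p = C^p * δ^(γ*p) := by
              rw [Real.mul_rpow hC.le (Real.rpow_nonneg h0.le γ), ← Real.rpow_mul h0.le]
            have e2 : δ ^ (p*γ-1) = δ ^ (γ*p) / δ := by
              rw [Real.rpow_sub h0, Real.rpow_one, mul_comm γ p]
            rw [herrdef, e1]
            show T / δ * (C ^ p * δ ^ (γ * p)) = C ^ p * T * δ ^ (p * γ - 1)
            rw [e2]
            field_simp
    have hdecomp : stepPVar (fun t => f t + ∑ m, if τ m ≤ t then c m else 0) p δ T =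
        (∑ k ∈ Finset.Icc 1 N \ S, term k) + g δ := by
      rw [hstep, ← Finset.sum_sdiff hSsub, hSsum]
    refine ⟨fun m => hgrid (K m δ) (Finset.mem_Icc.mpr ⟨hK1 m, hKN m⟩), ?_, ?_⟩
    · rw [hdecomp]; linarith
    · rw [hdecomp]; linarith
  -- limits
  have hδγ : Tendsto (fun δ : ℝ => C * δ ^ γ) (nhdsWithin 0 (Set.Ioi 0)) (nhds 0) := by
    have h1 : ContinuousAt (fun x : ℝ => x ^ γ) 0 :=
      Real.continuousAt_rpow_const 0 γ (Or.inr hγ0.le)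
    have h2 : Tendsto (fun δ : ℝ => C * δ ^ γ) (nhdsWithin 0 (Set.Ioi 0)) (nhds (C * 0 ^ γ)) :=
      (h1.tendsto.mono_left nhdsWithin_le_nhds).const_mul C
    rwa [Real.zero_rpow hγ0.ne', mul_zero] at h2
  have herr : Tendsto err (nhdsWithin 0 (Set.Ioi 0)) (nhds 0) := by
    have h1 : ContinuousAt (fun x : ℝ => x ^ (p*γ-1)) 0 :=
      Real.continuousAt_rpow_const 0 _ (Or.inr (by linarith))
    have h2 : Tendsto (fun δ : ℝ => C ^ p * T * δ ^ (p*γ-1)) (nhdsWithin 0 (Set.Ioi 0))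
        (nhds (C ^ p * T * (0:ℝ) ^ (p*γ-1))) :=
      (h1.tendsto.mono_left nhdsWithin_le_nhds).const_mul (C ^ p * T)
    rwa [Real.zero_rpow (by linarith : (0:ℝ) < p*γ-1).ne', mul_zero] at h2
  have hgtend : Tendsto g (nhdsWithin 0 (Set.Ioi 0)) (nhds (∑ m, |c m| ^ p)) := by
    rw [hg]
    apply tendsto_finset_sum
    intro m _
    have hneg : Tendsto (fun δ : ℝ => -(C * δ ^ γ)) (nhdsWithin 0 (Set.Ioi 0)) (nhds 0) := by
      simpa using hδγ.neg
    have hh : Tendsto (fun δ => f ((K m δ : ℝ) * δ) - f (((K m δ : ℝ) - 1) * δ))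
        (nhdsWithin 0 (Set.Ioi 0)) (nhds 0) := by
      apply tendsto_of_tendsto_of_tendsto_of_le_of_le' hneg hδγ
      · filter_upwards [hMain] with δ hδ using (abs_le.mp (hδ.1 m)).1
      · filter_upwards [hMain] with δ hδ using (abs_le.mp (hδ.1 m)).2
    have hcont : ContinuousAt (fun x : ℝ => |x + c m| ^ p) 0 := by
      have h1 : ContinuousAt (fun x : ℝ => |x + c m|) 0 := by fun_prop
      exact (Real.continuousAt_rpow_const _ p (Or.inr hp.le)).comp h1
    have hcomp := hcont.tendsto.comp hh
    rw [zero_add] at hcomp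
    exact hcomp
  have hub : Tendsto (fun δ => g δ + err δ) (nhdsWithin 0 (Set.Ioi 0))
      (nhds (∑ m, |c m| ^ p)) := by
    simpa using hgtend.add herr
  apply tendsto_of_tendsto_of_tendsto_of_le_of_le' hgtend hub
  · filter_upwards [hMain] with δ hδ using hδ.2.1
  · filter_upwards [hMain] with δ hδ using hδ.2.2
end

section
/- Let f : ℝ → ℝ be continuous on [0,T] (T > 0) and suppose that its quadratic variation along the uniform partitions exists, i.e. lim_{n→∞} ∑_{k=1}^{n} (f(kT/n) − f((k−1)T/n))² = A for some A ∈ ℝ. Let J be the jump part with jump sizes c_1,…,c_r and distinct jump times τ_1,…,τ_r ∈ (0,T). Then lim_{n→∞} ∑_{k=1}^{n} ((f+J)(kT/n) − (f+J)((k−1)T/n))² = A + ∑_{m=1}^{r} c_m². -/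
open Finset Filter

private lemma qv_sq_expand (x y p q d : ℝ) (h : p - q = d) :
    ((x + p) - (y + q)) ^ 2 = (x - y) ^ 2 + (2 * (x - y) * d + d ^ 2) := by
  have h2 : (x + p) - (y + q) = (x - y) + d := by rw [← h]; ring
  rw [h2]; ring

/-- If `f` is continuous on `[0,T]` and its quadratic variation along the uniform
partitions exists with limit `A`, and `J = ∑_m c_m · 1_{[τ_m,∞)}` is a jump part with
distinct jump times `τ_m ∈ (0,T)`, then the quadratic variation of `f + J` along the
uniform partitions converges to `A + ∑_m c_m²`. -/
theorem quadratic_variation_of_continuous_plus_jumps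
    (f : ℝ → ℝ) (T A : ℝ) (hT : 0 < T)
    (hf : ContinuousOn f (Set.Icc 0 T))
    (hQV : Tendsto (fun n : ℕ => ∑ k ∈ Finset.Icc 1 n,
        (f ((k : ℝ) * T / n) - f (((k : ℝ) - 1) * T / n)) ^ 2) atTop (nhds A))
    (r : ℕ) (c τ : Fin r → ℝ) (hτinj : Function.Injective τ)
    (hτmem : ∀ m, τ m ∈ Set.Ioo (0 : ℝ) T)
    (J : ℝ → ℝ) (hJ : J = fun t => ∑ m, if τ m ≤ t then c m else 0) :
    Tendsto (fun n : ℕ => ∑ k ∈ Finset.Icc 1 n,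
        ((f ((k : ℝ) * T / n) + J ((k : ℝ) * T / n)) -
          (f (((k : ℝ) - 1) * T / n) + J (((k : ℝ) - 1) * T / n))) ^ 2)
      atTop (nhds (A + ∑ m, (c m) ^ 2)) := by
  subst hJ
  -- K m n : the index of the partition interval containing τ m
  set K : Fin r → ℕ → ℕ := fun m n => ⌈τ m * n / T⌉₊ with hKdef
  have hKb : ∀ (m : Fin r) (n : ℕ), 1 ≤ n → 1 ≤ K m n ∧ K m n ≤ n := by
    intro m n hn
    have hτ := hτmem m
    have hn' : (0:ℝ) < n := by exact_mod_cast hn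
    refine ⟨Nat.ceil_pos.2 (div_pos (mul_pos hτ.1 hn') hT), ?_⟩
    rw [Nat.ceil_le, div_le_iff₀ hT]
    nlinarith [hτ.2]
  have hchar : ∀ (m : Fin r) (n k : ℕ), 1 ≤ n → 1 ≤ k →
      (K m n = k ↔ (((k:ℝ) - 1) * T / n < τ m ∧ τ m ≤ (k:ℝ) * T / n)) := by
    intro m n k hn hk
    have hn' : (0:ℝ) < n := by exact_mod_cast hn
    have h1 : K m n ≤ k ↔ τ m ≤ (k:ℝ) * T / n := by
      rw [Nat.ceil_le, div_le_iff₀ hT, le_div_iff₀ hn']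
    have h2 : k ≤ K m n ↔ ((k:ℝ) - 1) * T / n < τ m := by
      have : k ≤ K m n ↔ k - 1 < K m n := by omega
      rw [this, Nat.lt_ceil, Nat.cast_sub hk, Nat.cast_one, lt_div_iff₀ hT, div_lt_iff₀ hn']
    constructor
    · rintro rfl; exact ⟨h2.1 le_rfl, h1.1 le_rfl⟩
    · rintro ⟨ha, hb⟩; exact le_antisymm (h1.2 hb) (h2.2 ha)
  -- the jump increments
  have hΔJ : ∀ (n : ℕ), 1 ≤ n → ∀ k ∈ Finset.Icc 1 n,
      (∑ m, if τ m ≤ (k:ℝ) * T / n then c m else 0)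
        - (∑ m, if τ m ≤ ((k:ℝ) - 1) * T / n then c m else 0)
      = ∑ m, if K m n = k then c m else 0 := by
    intro n hn k hk
    rw [Finset.mem_Icc] at hk
    have hn' : (0:ℝ) < n := by exact_mod_cast hn
    rw [← Finset.sum_sub_distrib]
    refine Finset.sum_congr rfl fun m _ => ?_
    simp only [hchar m n k hn hk.1]
    by_cases h1 : τ m ≤ ((k:ℝ) - 1) * T / n
    · have h2 : τ m ≤ (k:ℝ) * T / n := by
        refine h1.trans (by gcongr <;> nlinarith)
      simp [h1, h2, not_lt.2 h1]
    · by_cases h2 : τ m ≤ (k:ℝ) * T / n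
      · simp [h1, h2, not_le.1 h1]
      · simp [h1, h2]
  -- eventual injectivity of m ↦ K m n
  have hinj : ∀ᶠ n : ℕ in atTop, ∀ m m' : Fin r, K m n = K m' n → m = m' := by
    rw [Filter.eventually_all]
    intro m
    rw [Filter.eventually_all]
    intro m'
    rcases eq_or_ne m m' with rfl | hne
    · exact Eventually.of_forall fun _ _ => rfl
    · have hd : 0 < |τ m - τ m'| := abs_pos.2 (sub_ne_zero.2 fun h => hne (hτinj h))
      have hlim : Tendsto (fun n : ℕ => T / n) atTop (nhds 0) :=
        tendsto_const_nhds.div_atTop tendsto_natCast_atTop_atTop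
      filter_upwards [hlim.eventually (eventually_lt_nhds hd), eventually_ge_atTop 1]
        with n hlt hn hKeq
      exfalso
      have hn' : (0:ℝ) < n := by exact_mod_cast hn
      set k := K m n with hk
      have hk1 : 1 ≤ k := (hKb m n hn).1
      have hm := (hchar m n k hn hk1).1 rfl
      have hm' := (hchar m' n k hn hk1).1 hKeq.symm
      have hsub : (k:ℝ) * T / ↑n - ((k:ℝ) - 1) * T / ↑n = T / ↑n := by
        field_simp; ring
      have : |τ m - τ m'| < T / n := by
        rw [abs_sub_lt_iff]
        constructor <;> linarith [hm.1, hm.2, hm'.1, hm'.2]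
      linarith
  -- the cross term tends to zero
  have hcross : Tendsto (fun n : ℕ => ∑ m, 2 * c m *
      (f ((K m n : ℝ) * T / n) - f (((K m n : ℝ) - 1) * T / n))) atTop (nhds 0) := by
    have h0 : (0:ℝ) = ∑ _m : Fin r, (0:ℝ) := by simp
    rw [h0]
    refine tendsto_finset_sum _ fun m _ => ?_
    have hTn : Tendsto (fun n : ℕ => T / n) atTop (nhds 0) :=
      tendsto_const_nhds.div_atTop tendsto_natCast_atTop_atTop
    have key : ∀ᶠ n : ℕ in atTop,
        ((K m n : ℝ) * T / n ∈ Set.Icc 0 T) ∧ (((K m n : ℝ) - 1) * T / n ∈ Set.Icc 0 T) ∧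
        τ m ≤ (K m n : ℝ) * T / n ∧ (K m n : ℝ) * T / n ≤ τ m + T / n ∧
        τ m - T / n ≤ ((K m n : ℝ) - 1) * T / n ∧ ((K m n : ℝ) - 1) * T / n ≤ τ m := by
      filter_upwards [eventually_ge_atTop 1] with n hn
      have hn' : (0:ℝ) < n := by exact_mod_cast hn
      have hk1 : (1:ℝ) ≤ (K m n : ℝ) := by exact_mod_cast (hKb m n hn).1
      have hk2 : (K m n : ℝ) ≤ n := by exact_mod_cast (hKb m n hn).2
      have hm2 := (hchar m n (K m n) hn (hKb m n hn).1).1 rfl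
      have hsub : (K m n : ℝ) * T / n - ((K m n : ℝ) - 1) * T / n = T / n := by
        field_simp; ring
      have h0a : 0 ≤ (K m n : ℝ) * T / n := by positivity
      have haT : (K m n : ℝ) * T / n ≤ T := by
        rw [div_le_iff₀ hn']; nlinarith
      have h0b : 0 ≤ ((K m n : ℝ) - 1) * T / n := by
        apply div_nonneg _ hn'.le; nlinarith
      exact ⟨⟨h0a, haT⟩, ⟨h0b, by linarith [hm2.1, (hτmem m).2]⟩, hm2.2,
        by linarith [hm2.1], by linarith [hm2.2], hm2.1.le⟩
    have hta : Tendsto (fun n : ℕ => (K m n : ℝ) * T / n) atTop (nhds (τ m)) := by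
      refine tendsto_of_tendsto_of_tendsto_of_le_of_le'
        (tendsto_const_nhds : Tendsto (fun _ : ℕ => τ m) atTop (nhds (τ m)))
        (by simpa using (tendsto_const_nhds : Tendsto (fun _ : ℕ => τ m) atTop _).add hTn)
        ?_ ?_
      · filter_upwards [key] with n h; exact h.2.2.1
      · filter_upwards [key] with n h; exact h.2.2.2.1
    have htb : Tendsto (fun n : ℕ => ((K m n : ℝ) - 1) * T / n) atTop (nhds (τ m)) := by
      refine tendsto_of_tendsto_of_tendsto_of_le_of_le'
        (by simpa using (tendsto_const_nhds : Tendsto (fun _ : ℕ => τ m) atTop _).sub hTn)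
        (tendsto_const_nhds : Tendsto (fun _ : ℕ => τ m) atTop (nhds (τ m)))
        ?_ ?_
      · filter_upwards [key] with n h; exact h.2.2.2.2.1
      · filter_upwards [key] with n h; exact h.2.2.2.2.2
    have hfc : ContinuousWithinAt f (Set.Icc 0 T) (τ m) :=
      hf (τ m) ⟨(hτmem m).1.le, (hτmem m).2.le⟩
    have hfa : Tendsto (fun n : ℕ => f ((K m n : ℝ) * T / n)) atTop (nhds (f (τ m))) := by
      apply hfc.tendsto.comp
      rw [tendsto_nhdsWithin_iff]
      exact ⟨hta, key.mono fun n h => h.1⟩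
    have hfb : Tendsto (fun n : ℕ => f (((K m n : ℝ) - 1) * T / n)) atTop (nhds (f (τ m))) := by
      apply hfc.tendsto.comp
      rw [tendsto_nhdsWithin_iff]
      exact ⟨htb, key.mono fun n h => h.2.1⟩
    have := ((hfa.sub hfb).const_mul (2 * c m))
    simpa using this
  -- eventual equality of the sums
  have hEq : ∀ᶠ n : ℕ in atTop,
      (∑ k ∈ Finset.Icc 1 n,
        ((f ((k:ℝ) * T / n) + ∑ m, if τ m ≤ (k:ℝ) * T / n then c m else 0)
          - (f (((k:ℝ) - 1) * T / n) + ∑ m, if τ m ≤ ((k:ℝ) - 1) * T / n then c m else 0)) ^ 2)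
      = (∑ k ∈ Finset.Icc 1 n, (f ((k:ℝ) * T / n) - f (((k:ℝ) - 1) * T / n)) ^ 2)
        + ((∑ m, 2 * c m * (f ((K m n : ℝ) * T / n) - f (((K m n : ℝ) - 1) * T / n)))
          + ∑ m, (c m) ^ 2) := by
    filter_upwards [hinj, eventually_ge_atTop 1] with n hinj_n hn
    have step1 : ∀ k ∈ Finset.Icc 1 n,
        ((f ((k:ℝ) * T / n) + ∑ m, if τ m ≤ (k:ℝ) * T / n then c m else 0)
          - (f (((k:ℝ) - 1) * T / n) + ∑ m, if τ m ≤ ((k:ℝ) - 1) * T / n then c m else 0)) ^ 2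
        = (f ((k:ℝ) * T / n) - f (((k:ℝ) - 1) * T / n)) ^ 2
          + (2 * (f ((k:ℝ) * T / n) - f (((k:ℝ) - 1) * T / n))
              * (∑ m, if K m n = k then c m else 0)
            + (∑ m, if K m n = k then c m else 0) ^ 2) :=
      fun k hk => qv_sq_expand _ _ _ _ _ (hΔJ n hn k hk)
    rw [Finset.sum_congr rfl step1, Finset.sum_add_distrib]
    congr 1
    have himg : Finset.image (fun m => K m n) Finset.univ ⊆ Finset.Icc 1 n := by
      intro k hk
      simp only [Finset.mem_image] at hk
      obtain ⟨m, _, rfl⟩ := hk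
      exact Finset.mem_Icc.2 ⟨(hKb m n hn).1, (hKb m n hn).2⟩
    rw [← Finset.sum_subset himg ?_]
    · rw [Finset.sum_image (fun m _ m' _ h => hinj_n m m' h), ← Finset.sum_add_distrib]
      refine Finset.sum_congr rfl fun m _ => ?_
      have hD : (∑ m', if K m' n = K m n then c m' else 0) = c m := by
        have hcond : ∀ m' : Fin r, (K m' n = K m n) = (m' = m) :=
          fun m' => propext ⟨fun h => hinj_n m' m h, fun h => by rw [h]⟩
        simp only [hcond]
        simp [Finset.sum_ite_eq']
      rw [hD]
      ring
    · intro k _ hknot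
      have hD0 : (∑ m', if K m' n = k then c m' else 0) = 0 := by
        refine Finset.sum_eq_zero fun m' _ => if_neg fun h => ?_
        exact hknot (Finset.mem_image.2 ⟨m', Finset.mem_univ _, h⟩)
      rw [hD0]; ring
  have hfinal := hQV.add (hcross.add (tendsto_const_nhds :
      Tendsto (fun _ : ℕ => ∑ m, (c m) ^ 2) atTop _))
  rw [zero_add] at hfinal
  exact hfinal.congr' (hEq.mono fun n h => h.symm)
end

section
/- Let (ξ_i)_{i≥1} be an i.i.d. sequence of centered real Gaussian random variables with variance v > 0, S_0 := 0, S_k := ξ_1 + … + ξ_k, let M ≥ 1 be an integer and p > 0. Then almost surely the ratio of the 2M-step p-variation to the M-step p-variation converges to 2^{p/2 − 1}: lim_{n→∞} ( ∑_{k=1}^{⌊n/(2M)⌋} |S_{2kM} − S_{(2k−2)M}|^p ) / ( ∑_{k=1}^{⌊n/M⌋} |S_{kM} − S_{(k−1)M}|^p ) = 2^{p/2 − 1}. -/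
open Finset Filter MeasureTheory ProbabilityTheory

section AuxGaussianWalk
open Real

section PDF

variable {v1 v2 : NNReal}

lemma pdf_mul_eq (h1 : v1 ≠ 0) (h2 : v2 ≠ 0) (z x : ℝ) :
    gaussianPDFReal 0 v1 x * gaussianPDFReal x v2 z =
      ((√(2 * π * v1))⁻¹ * (√(2 * π * v2))⁻¹ * rexp (-z ^ 2 / (2 * ((v1:ℝ) + v2)))) *
        rexp (-(((v1:ℝ) + v2) / (2 * v1 * v2)) * (x - v1 * z / ((v1:ℝ) + v2)) ^ 2) := by
  have ha : (0:ℝ) < v1 := lt_of_le_of_ne v1.coe_nonneg (by exact_mod_cast h1.symm)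
  have hb : (0:ℝ) < v2 := lt_of_le_of_ne v2.coe_nonneg (by exact_mod_cast h2.symm)
  have hs : (0:ℝ) < (v1:ℝ) + v2 := by linarith
  simp only [gaussianPDFReal, sub_zero]
  have hexp : rexp (-x ^ 2 / (2 * (v1:ℝ))) * rexp (-(z - x) ^ 2 / (2 * (v2:ℝ)))
      = rexp (-z ^ 2 / (2 * ((v1:ℝ) + v2))) *
        rexp (-(((v1:ℝ) + v2) / (2 * v1 * v2)) * (x - v1 * z / ((v1:ℝ) + v2)) ^ 2) := by
    rw [← Real.exp_add, ← Real.exp_add]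
    congr 1
    field_simp
    ring
  rw [mul_mul_mul_comm, hexp]
  ring

lemma integrable_pdf_mul (h1 : v1 ≠ 0) (h2 : v2 ≠ 0) (z : ℝ) :
    Integrable (fun x => gaussianPDFReal 0 v1 x * gaussianPDFReal x v2 z) := by
  have ha : (0:ℝ) < v1 := lt_of_le_of_ne v1.coe_nonneg (by exact_mod_cast h1.symm)
  have hb : (0:ℝ) < v2 := lt_of_le_of_ne v2.coe_nonneg (by exact_mod_cast h2.symm)
  have hc : (0:ℝ) < ((v1:ℝ) + v2) / (2 * v1 * v2) := by positivity
  simp only [pdf_mul_eq h1 h2 z]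
  exact (((integrable_exp_neg_mul_sq hc).comp_sub_right _).const_mul _)

lemma integral_pdf_mul (h1 : v1 ≠ 0) (h2 : v2 ≠ 0) (z : ℝ) :
    ∫ x, gaussianPDFReal 0 v1 x * gaussianPDFReal x v2 z = gaussianPDFReal 0 (v1 + v2) z := by
  have ha : (0:ℝ) < v1 := lt_of_le_of_ne v1.coe_nonneg (by exact_mod_cast h1.symm)
  have hb : (0:ℝ) < v2 := lt_of_le_of_ne v2.coe_nonneg (by exact_mod_cast h2.symm)
  have hs : (0:ℝ) < (v1:ℝ) + v2 := by linarith
  have hc : (0:ℝ) < ((v1:ℝ) + v2) / (2 * v1 * v2) := by positivity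
  have hπ : (0:ℝ) < π := pi_pos
  simp only [pdf_mul_eq h1 h2 z]
  rw [integral_const_mul, integral_sub_right_eq_self
    (fun x => rexp (-(((v1:ℝ) + v2) / (2 * v1 * v2)) * x ^ 2)) (v1 * z / ((v1:ℝ) + v2)),
    integral_gaussian]
  have hcoe : ((v1 + v2 : NNReal) : ℝ) = (v1:ℝ) + v2 := by push_cast; ring
  rw [gaussianPDFReal, hcoe, sub_zero]
  have key : (√(2 * π * v1))⁻¹ * (√(2 * π * v2))⁻¹ * √(π / (((v1:ℝ) + v2) / (2 * v1 * v2)))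
      = (√(2 * π * ((v1:ℝ) + v2)))⁻¹ := by
    rw [← Real.sqrt_inv (2 * π * v1), ← Real.sqrt_inv (2 * π * v2),
      ← Real.sqrt_inv (2 * π * ((v1:ℝ) + v2)),
      ← Real.sqrt_mul (by positivity : (0:ℝ) ≤ (2 * π * (v1:ℝ))⁻¹),
      ← Real.sqrt_mul (by positivity : (0:ℝ) ≤ (2 * π * (v1:ℝ))⁻¹ * (2 * π * (v2:ℝ))⁻¹)]
    congr 1
    field_simp
  rw [← key]
  ring

end PDF

section Conv

variable {v1 v2 : NNReal}

lemma lintegral_gaussianPDF_mul (h1 : v1 ≠ 0) (h2 : v2 ≠ 0) (z : ℝ) :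
    ∫⁻ x, gaussianPDF 0 v1 x * gaussianPDF x v2 z = gaussianPDF 0 (v1 + v2) z := by
  simp only [gaussianPDF]
  have : ∀ x, ENNReal.ofReal (gaussianPDFReal 0 v1 x) * ENNReal.ofReal (gaussianPDFReal x v2 z)
      = ENNReal.ofReal (gaussianPDFReal 0 v1 x * gaussianPDFReal x v2 z) := fun x =>
    (ENNReal.ofReal_mul (gaussianPDFReal_nonneg 0 v1 x)).symm
  simp only [this]
  rw [← ofReal_integral_eq_lintegral_ofReal (integrable_pdf_mul h1 h2 z)
    (Filter.Eventually.of_forall fun x =>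
      mul_nonneg (gaussianPDFReal_nonneg _ _ _) (gaussianPDFReal_nonneg _ _ _)),
    integral_pdf_mul h1 h2 z]

lemma measurable_gaussianPDF_pair (v : NNReal) :
    Measurable (fun q : ℝ × ℝ => gaussianPDF q.1 v q.2) := by
  apply Measurable.ennreal_ofReal
  unfold gaussianPDFReal
  fun_prop

lemma gaussianReal_conv (h1 : v1 ≠ 0) (h2 : v2 ≠ 0) :
    (gaussianReal 0 v1).conv (gaussianReal 0 v2) = gaussianReal 0 (v1 + v2) := by
  have hadd : Measurable (fun q : ℝ × ℝ => q.1 + q.2) := measurable_add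
  ext s hs
  rw [show (gaussianReal 0 v1).conv (gaussianReal 0 v2) = Measure.map (fun q : ℝ × ℝ => q.1 + q.2) ((gaussianReal 0 v1).prod (gaussianReal 0 v2)) from rfl, Measure.map_apply hadd hs, Measure.prod_apply (hadd hs)]
  have hslice : ∀ x : ℝ, (gaussianReal 0 v2) (Prod.mk x ⁻¹' ((fun q : ℝ × ℝ => q.1 + q.2) ⁻¹' s))
      = ∫⁻ z in s, gaussianPDF x v2 z := by
    intro x
    have : (Prod.mk x ⁻¹' ((fun q : ℝ × ℝ => q.1 + q.2) ⁻¹' s)) = (fun y => x + y) ⁻¹' s := rfl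
    rw [this, ← Measure.map_apply (measurable_const_add x) hs, gaussianReal_map_const_add,
      zero_add, gaussianReal_of_var_ne_zero _ h2, withDensity_apply _ hs]
  simp only [hslice]
  rw [gaussianReal_of_var_ne_zero _ h1,
    lintegral_withDensity_eq_lintegral_mul _ (measurable_gaussianPDF 0 v1)
      ((measurable_gaussianPDF_pair v2).lintegral_prod_right')]
  have : ∀ x, (gaussianPDF 0 v1 * fun x => ∫⁻ z in s, gaussianPDF x v2 z) x
      = ∫⁻ z in s, gaussianPDF 0 v1 x * gaussianPDF x v2 z := by
    intro x
    simp only [Pi.mul_apply]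
    rw [lintegral_const_mul _ (measurable_gaussianPDF x v2)]
  simp only [this]
  rw [lintegral_lintegral_swap]
  · simp only [lintegral_gaussianPDF_mul h1 h2]
    rw [gaussianReal_of_var_ne_zero _ (by simp [h1]), withDensity_apply _ hs]
  · exact (((measurable_gaussianPDF 0 v1).comp measurable_fst).mul
      (measurable_gaussianPDF_pair v2)).aemeasurable

end Conv

section Sum

variable {Ω : Type*} [MeasureSpace Ω] [IsProbabilityMeasure (ℙ : Measure Ω)]

lemma indepFun_add_gaussian {X Y : Ω → ℝ} (hX : Measurable X) (hY : Measurable Y)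
    (hXY : IndepFun X Y ℙ) {v1 v2 : NNReal} (h1 : v1 ≠ 0) (h2 : v2 ≠ 0)
    (hlX : Measure.map X ℙ = gaussianReal 0 v1) (hlY : Measure.map Y ℙ = gaussianReal 0 v2) :
    Measure.map (fun ω => X ω + Y ω) ℙ = gaussianReal 0 (v1 + v2) := by
  have hmap : Measure.map (fun ω => (X ω, Y ω)) ℙ
      = (Measure.map X ℙ).prod (Measure.map Y ℙ) :=
    (indepFun_iff_map_prod_eq_prod_map_map hX.aemeasurable hY.aemeasurable).mp hXY
  have : (fun ω => X ω + Y ω) = (fun q : ℝ × ℝ => q.1 + q.2) ∘ (fun ω => (X ω, Y ω)) := rfl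
  rw [this, ← Measure.map_map measurable_add (hX.prodMk hY), hmap, hlX, hlY,
    ← gaussianReal_conv h1 h2]
  rfl

lemma map_finset_sum_gaussian (ξ : ℕ → Ω → ℝ) (v : NNReal) (hv : v ≠ 0)
    (hmeas : ∀ i, Measurable (ξ i))
    (hindep : iIndepFun ξ ℙ)
    (hdist : ∀ i, Measure.map (ξ i) ℙ = gaussianReal 0 v)
    (s : Finset ℕ) :
    Measure.map (fun ω => ∑ i ∈ s, ξ i ω) ℙ = gaussianReal 0 ((s.card : NNReal) * v) := by
  classical
  induction s using Finset.induction_on with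
  | empty =>
      simp only [Finset.sum_empty, Finset.card_empty, Nat.cast_zero, zero_mul,
        gaussianReal_zero_var]
      rw [Measure.map_const]
      simp
  | @insert a s ha ih =>
      rcases Finset.eq_empty_or_nonempty s with rfl | hne
      · simpa using hdist a
      · have hcard : s.card ≠ 0 := Finset.card_ne_zero_of_mem hne.choose_spec
        have hsum_meas : Measurable (fun ω => ∑ i ∈ s, ξ i ω) := by
          apply Finset.measurable_sum
          exact fun i _ => hmeas i
        have hind : IndepFun (ξ a) (fun ω => ∑ i ∈ s, ξ i ω) ℙ := by
          have := (hindep.indepFun_finsetSum_of_notMem hmeas ha).symm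
          have hh : (∑ i ∈ s, ξ i) = (fun ω => ∑ i ∈ s, ξ i ω) := by
            funext ω; simp
          rwa [hh] at this
        have key := indepFun_add_gaussian (hmeas a) hsum_meas hind hv
          (mul_ne_zero (by exact_mod_cast hcard) hv) (hdist a) ih
        have : (fun ω => ∑ i ∈ insert a s, ξ i ω)
            = (fun ω => ξ a ω + ∑ i ∈ s, ξ i ω) := by
          funext ω; rw [Finset.sum_insert ha]
        rw [this, key, Finset.card_insert_of_notMem ha]
        congr 1
        push_cast
        ring

end Sum

section Moments

open Set

lemma integrable_abs_rpow_mul_exp_neg_mul_sq {b : ℝ} (hb : 0 < b) {s : ℝ} (hs : -1 < s) :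
    Integrable fun x : ℝ => |x| ^ s * rexp (-b * x ^ 2) := by
  have h1 : IntegrableOn (fun x : ℝ => |x| ^ s * rexp (-b * x ^ 2)) (Ioi 0) :=
    (integrableOn_rpow_mul_exp_neg_mul_sq hb hs).congr_fun
      (fun x hx => by rw [abs_of_pos hx]) measurableSet_Ioi
  rw [← integrableOn_univ, ← @Iio_union_Ici _ _ (0 : ℝ), integrableOn_union,
    integrableOn_Ici_iff_integrableOn_Ioi]
  refine ⟨?_, h1⟩
  rw [← (Measure.measurePreserving_neg (volume : Measure ℝ)).integrableOn_comp_preimage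
      (Homeomorph.neg ℝ).measurableEmbedding]
  simp only [Function.comp_def, abs_neg, neg_sq, neg_preimage, neg_Iio, neg_neg, neg_zero]
  exact h1

lemma continuous_abs_rpow {p : ℝ} (hp : 0 ≤ p) : Continuous fun x : ℝ => |x| ^ p :=
  (Real.continuous_rpow_const hp).comp continuous_abs

lemma integrable_abs_rpow_gaussian {V : NNReal} (hV : V ≠ 0) {p : ℝ} (hp : 0 < p) :
    Integrable (fun x : ℝ => |x| ^ p) (gaussianReal 0 V) := by
  have hVpos : (0:ℝ) < V := lt_of_le_of_ne V.coe_nonneg (by exact_mod_cast hV.symm)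
  have hb : (0:ℝ) < (2 * (V:ℝ))⁻¹ := by positivity
  rw [gaussianReal_of_var_ne_zero _ hV]
  rw [integrable_withDensity_iff (measurable_gaussianPDF 0 V)
    (Filter.Eventually.of_forall fun x => ENNReal.ofReal_lt_top)]
  have heq : (fun x : ℝ => |x| ^ p * (gaussianPDF 0 V x).toReal)
      = (fun x : ℝ => (√(2 * π * V))⁻¹ * (|x| ^ p * rexp (-(2 * (V:ℝ))⁻¹ * x ^ 2))) := by
    funext x
    rw [gaussianPDF, ENNReal.toReal_ofReal (gaussianPDFReal_nonneg _ _ _), gaussianPDFReal,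
      sub_zero]
    have : -x ^ 2 / (2 * (V:ℝ)) = -(2 * (V:ℝ))⁻¹ * x ^ 2 := by field_simp
    rw [this]; ring
  rw [heq]
  exact (integrable_abs_rpow_mul_exp_neg_mul_sq hb (by linarith)).const_mul _

lemma integral_abs_rpow_gaussian_pos {V : NNReal} (hV : V ≠ 0) {p : ℝ} (hp : 0 < p) :
    0 < ∫ x, |x| ^ p ∂(gaussianReal 0 V) := by
  rw [integral_pos_iff_support_of_nonneg
    (fun x => Real.rpow_nonneg (abs_nonneg x) p) (integrable_abs_rpow_gaussian hV hp)]
  have hsupp : Function.support (fun x : ℝ => |x| ^ p) = {(0:ℝ)}ᶜ := by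
    ext x
    simp only [Function.mem_support, Set.mem_compl_iff, Set.mem_singleton_iff]
    constructor
    · intro h h0; subst h0; simp [Real.zero_rpow hp.ne'] at h
    · intro h
      exact ne_of_gt (Real.rpow_pos_of_pos (abs_pos.mpr h) p)
  rw [hsupp]
  have h0 : (gaussianReal 0 V) {(0:ℝ)} = 0 :=
    (gaussianReal_absolutelyContinuous 0 hV) Real.volume_singleton
  have := measure_compl (μ := gaussianReal 0 V) (measurableSet_singleton (0:ℝ)) (by
    exact measure_ne_top _ _)
  rw [this, h0]
  simp

lemma integral_abs_rpow_gaussian_two_mul {V : NNReal} (hV : V ≠ 0) {p : ℝ} (hp : 0 < p) :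
    ∫ x, |x| ^ p ∂(gaussianReal 0 (2 * V))
      = 2 ^ (p / 2) * ∫ x, |x| ^ p ∂(gaussianReal 0 V) := by
  have h2 : (gaussianReal 0 V).map (fun x => Real.sqrt 2 * x) = gaussianReal 0 (2 * V) := by
    rw [gaussianReal_map_const_mul]
    congr 1
    · ring
    · congr 1
      ext
      push_cast
      rw [Real.sq_sqrt (by norm_num : (0:ℝ) ≤ 2)]
  rw [← h2, integral_map (by fun_prop) ((continuous_abs_rpow hp.le).measurable.aestronglyMeasurable)]
  rw [← integral_const_mul]
  congr 1
  funext x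
  rw [abs_mul, Real.mul_rpow (abs_nonneg _) (abs_nonneg _),
    abs_of_nonneg (Real.sqrt_nonneg 2), Real.sqrt_eq_rpow, ← Real.rpow_mul (by norm_num)]
  rw [one_div]
  ring_nf

end Moments

section Blocks

variable {Ω : Type*} [MeasureSpace Ω] [IsProbabilityMeasure (ℙ : Measure Ω)]

lemma indepFun_finsetSum_of_disjoint {ξ : ℕ → Ω → ℝ} (hmeas : ∀ i, Measurable (ξ i))
    (hindep : iIndepFun ξ ℙ)
    (s t : Finset ℕ) (hst : Disjoint s t) :
    IndepFun (fun ω => ∑ i ∈ s, ξ i ω) (fun ω => ∑ i ∈ t, ξ i ω) ℙ := by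
  classical
  have h := hindep.indepFun_finset s t hst hmeas
  have hgs : Measurable (fun f : (i : s) → ℝ => ∑ i, f i) :=
    Finset.measurable_sum Finset.univ (fun i _ => measurable_pi_apply i)
  have hgt : Measurable (fun f : (i : t) → ℝ => ∑ i, f i) :=
    Finset.measurable_sum Finset.univ (fun i _ => measurable_pi_apply i)
  have h2 := h.comp hgs hgt
  have es : ((fun f : (i : s) → ℝ => ∑ i, f i) ∘ (fun a (i : s) => ξ i a))
      = fun ω => ∑ i ∈ s, ξ i ω := by
    funext ω
    simp only [Function.comp_apply]
    exact Finset.sum_coe_sort s (fun i => ξ i ω)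
  have et : ((fun f : (i : t) → ℝ => ∑ i, f i) ∘ (fun a (i : t) => ξ i a))
      = fun ω => ∑ i ∈ t, ξ i ω := by
    funext ω
    simp only [Function.comp_apply]
    exact Finset.sum_coe_sort t (fun i => ξ i ω)
  rwa [es, et] at h2

lemma block_slln (ξ : ℕ → Ω → ℝ) (v : NNReal) (hv : 0 < v)
    (hmeas : ∀ i, Measurable (ξ i))
    (hindep : iIndepFun ξ ℙ)
    (hdist : ∀ i, Measure.map (ξ i) ℙ = gaussianReal 0 v)
    (L : ℕ) (hL : 1 ≤ L) (p : ℝ) (hp : 0 < p) :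
    ∀ᵐ ω ∂ℙ, Tendsto (fun n : ℕ =>
        (∑ j ∈ Finset.range n, |∑ i ∈ Finset.Ico (j * L) (j * L + L), ξ i ω| ^ p) / n)
      atTop (nhds (∫ x, |x| ^ p ∂(gaussianReal 0 ((L : NNReal) * v)))) := by
  classical
  set X : ℕ → Ω → ℝ := fun j ω => |∑ i ∈ Finset.Ico (j * L) (j * L + L), ξ i ω| ^ p with hX
  have hLv : ((L : NNReal) * v) ≠ 0 :=
    mul_ne_zero (by exact_mod_cast Nat.one_le_iff_ne_zero.mp hL) hv.ne'
  have hblockmeas : ∀ j, Measurable (fun ω => ∑ i ∈ Finset.Ico (j * L) (j * L + L), ξ i ω) :=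
    fun j => Finset.measurable_sum _ (fun i _ => hmeas i)
  have hg : Measurable (fun x : ℝ => |x| ^ p) := (continuous_abs_rpow hp.le).measurable
  have hlaw : ∀ j, Measure.map (fun ω => ∑ i ∈ Finset.Ico (j * L) (j * L + L), ξ i ω) ℙ
      = gaussianReal 0 ((L : NNReal) * v) := by
    intro j
    rw [map_finset_sum_gaussian ξ v hv.ne' hmeas hindep hdist]
    congr 2
    rw [Nat.card_Ico]
    simp
  have hXmeas : ∀ j, Measurable (X j) := fun j => hg.comp (hblockmeas j)
  have hXlaw : ∀ j, Measure.map (X j) ℙ = (gaussianReal 0 ((L : NNReal) * v)).map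
      (fun x : ℝ => |x| ^ p) := by
    intro j
    rw [← hlaw j, Measure.map_map hg (hblockmeas j)]
    rfl
  have hint : Integrable (X 0) ℙ := by
    have : Integrable ((fun x : ℝ => |x| ^ p)
        ∘ (fun ω => ∑ i ∈ Finset.Ico (0 * L) (0 * L + L), ξ i ω)) ℙ := by
      rw [← integrable_map_measure hg.aestronglyMeasurable (hblockmeas 0).aemeasurable, hlaw 0]
      exact integrable_abs_rpow_gaussian hLv hp
    exact this
  have hpind : Pairwise (Function.onFun (IndepFun · · ℙ) X) := by
    intro j k hjk
    have key : ∀ a b : ℕ, a < b →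
        Disjoint (Finset.Ico (a * L) (a * L + L)) (Finset.Ico (b * L) (b * L + L)) := by
      intro a b hab
      rw [Finset.disjoint_left]
      intro i hi hi'
      rw [Finset.mem_Ico] at hi hi'
      have hle : a * L + L ≤ b * L := by
        calc a * L + L = (a + 1) * L := by ring
        _ ≤ b * L := Nat.mul_le_mul_right L (Nat.succ_le_of_lt hab)
      exact lt_irrefl i (lt_of_lt_of_le hi.2 (le_trans hle hi'.1))
    have hdisj : Disjoint (Finset.Ico (j * L) (j * L + L)) (Finset.Ico (k * L) (k * L + L)) := by
      rcases hjk.lt_or_gt with h | h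
      · exact key j k h
      · exact (key k j h).symm
    exact ((indepFun_finsetSum_of_disjoint hmeas hindep _ _ hdisj).comp hg hg)
  have hident : ∀ j, IdentDistrib (X j) (X 0) ℙ ℙ := fun j =>
    ⟨(hXmeas j).aemeasurable, (hXmeas 0).aemeasurable, by rw [hXlaw j, hXlaw 0]⟩
  have hmean : (∫ ω, X 0 ω ∂ℙ) = ∫ x, |x| ^ p ∂(gaussianReal 0 ((L : NNReal) * v)) := by
    rw [← hlaw 0, integral_map (hblockmeas 0).aemeasurable hg.aestronglyMeasurable]
  have h := strong_law_ae_real X hint hpind hident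
  rw [hmean] at h
  exact h

end Blocks

section MainHelpers

lemma tendsto_nat_div_atTop' (k : ℕ) (hk : 1 ≤ k) :
    Tendsto (fun n : ℕ => n / k) atTop atTop := by
  apply Filter.tendsto_atTop_atTop.2
  intro b
  exact ⟨b * k, fun n hn => (Nat.le_div_iff_mul_le hk).2 hn⟩

lemma tendsto_nat_half_div : Tendsto (fun m : ℕ => ((m / 2 : ℕ) : ℝ) / (m : ℝ))
    atTop (nhds (1 / 2)) := by
  have hlow : Tendsto (fun m : ℕ => 1 / 2 - 1 / (m : ℝ)) atTop (nhds (1 / 2)) := by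
    simpa using (tendsto_const_nhds (x := (1:ℝ)/2)).sub tendsto_one_div_atTop_nhds_zero_nat
  apply tendsto_of_tendsto_of_tendsto_of_le_of_le' hlow tendsto_const_nhds
  · filter_upwards [Filter.eventually_ge_atTop 1] with m hm
    have hm' : (0:ℝ) < m := by exact_mod_cast hm
    have hmod : 2 * (m / 2) + m % 2 = m := Nat.div_add_mod m 2
    have hmod2 : m % 2 ≤ 1 := Nat.lt_succ_iff.mp (Nat.mod_lt m (by norm_num))
    have hc : (m:ℝ) = 2 * ((m / 2 : ℕ) : ℝ) + ((m % 2 : ℕ) : ℝ) := by exact_mod_cast hmod.symm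
    have hr : ((m % 2 : ℕ) : ℝ) ≤ 1 := by exact_mod_cast hmod2
    rw [div_sub_div _ _ (two_ne_zero) hm'.ne', div_le_div_iff₀ (by positivity) hm']
    nlinarith
  · filter_upwards [Filter.eventually_ge_atTop 1] with m hm
    have hm' : (0:ℝ) < m := by exact_mod_cast hm
    have hmod : 2 * (m / 2) + m % 2 = m := Nat.div_add_mod m 2
    have hc : (m:ℝ) = 2 * ((m / 2 : ℕ) : ℝ) + ((m % 2 : ℕ) : ℝ) := by exact_mod_cast hmod.symm
    have hr : (0:ℝ) ≤ ((m % 2 : ℕ) : ℝ) := by positivity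
    rw [div_le_div_iff₀ hm' (by norm_num : (0:ℝ) < 2)]
    linarith

lemma div_div_same_cancel (a b d : ℝ) (hd : d ≠ 0) : (a / d) / (b / d) = a / b := by
  rcases eq_or_ne b 0 with rfl | hb
  · simp
  · field_simp

lemma sum_Icc_one_eq_range (m : ℕ) (g : ℕ → ℝ) :
    ∑ k ∈ Finset.Icc 1 m, g k = ∑ j ∈ Finset.range m, g (1 + j) := by
  rw [← Finset.Ico_add_one_right_eq_Icc, Finset.sum_Ico_eq_sum_range]
  simp

end MainHelpers


end AuxGaussianWalk

/-- For a Gaussian random walk `S k = ξ 1 + … + ξ k` with `(ξ i)` i.i.d. centered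
Gaussian of variance `v > 0`, an integer `M ≥ 1` and `p > 0`, almost surely the ratio
of the `2M`-step `p`-variation to the `M`-step `p`-variation converges to `2^{p/2−1}`. -/
theorem gaussian_walk_p_variation_ratio_two_steps
    {Ω : Type*} [MeasureSpace Ω] [IsProbabilityMeasure (ℙ : Measure Ω)]
    (ξ : ℕ → Ω → ℝ) (v : NNReal) (hv : 0 < v)
    (hmeas : ∀ i, Measurable (ξ i))
    (hindep : iIndepFun ξ ℙ)
    (hdist : ∀ i, Measure.map (ξ i) ℙ = gaussianReal 0 v)
    (M : ℕ) (hM : 1 ≤ M) (p : ℝ) (hp : 0 < p) :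
    ∀ᵐ ω ∂ℙ, Tendsto (fun n : ℕ =>
        (∑ k ∈ Finset.Icc 1 (n / (2 * M)),
            |(∑ i ∈ Finset.range (2 * k * M), ξ i ω) -
              ∑ i ∈ Finset.range ((2 * k - 2) * M), ξ i ω| ^ p) /
        (∑ k ∈ Finset.Icc 1 (n / M),
            |(∑ i ∈ Finset.range (k * M), ξ i ω) -
              ∑ i ∈ Finset.range ((k - 1) * M), ξ i ω| ^ p))
      atTop (nhds ((2 : ℝ) ^ (p / 2 - 1))) := by
  have hMv : ((M : NNReal) * v) ≠ 0 :=
    mul_ne_zero (by exact_mod_cast Nat.one_le_iff_ne_zero.mp hM) hv.ne'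
  have hμ1pos : 0 < ∫ x, |x| ^ p ∂(gaussianReal 0 ((M : NNReal) * v)) :=
    integral_abs_rpow_gaussian_pos hMv hp
  have hB := block_slln ξ v hv hmeas hindep hdist M hM p hp
  have hA := block_slln ξ v hv hmeas hindep hdist (2 * M) (by omega) p hp
  set μ1 := ∫ x, |x| ^ p ∂(gaussianReal 0 ((M : NNReal) * v)) with hμ1def
  have h2M : (((2 * M : ℕ) : NNReal) * v) = 2 * ((M : NNReal) * v) := by push_cast; ring
  have hμ2 : (∫ x, |x| ^ p ∂(gaussianReal 0 (((2 * M : ℕ) : NNReal) * v)))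
      = 2 ^ (p / 2) * μ1 := by
    rw [h2M, integral_abs_rpow_gaussian_two_mul hMv hp, hμ1def]
  rw [hμ2] at hA
  filter_upwards [hA, hB] with ω hAω hBω
  have ha : ∀ m : ℕ, (∑ j ∈ Finset.range m,
      |∑ i ∈ Finset.Ico (j * (2 * M)) (j * (2 * M) + 2 * M), ξ i ω| ^ p) =
      (∑ j ∈ Finset.range m,
      |∑ i ∈ Finset.Ico (j * (2 * M)) (j * (2 * M) + 2 * M), ξ i ω| ^ p) := fun _ => rfl
  set a : ℕ → ℝ := fun m => ∑ j ∈ Finset.range m,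
      |∑ i ∈ Finset.Ico (j * (2 * M)) (j * (2 * M) + 2 * M), ξ i ω| ^ p with hadef
  set b : ℕ → ℝ := fun m => ∑ j ∈ Finset.range m,
      |∑ i ∈ Finset.Ico (j * M) (j * M + M), ξ i ω| ^ p with hbdef
  have hAω' : Tendsto (fun m : ℕ => a m / (m : ℝ)) atTop (nhds (2 ^ (p / 2) * μ1)) := hAω
  have hBω' : Tendsto (fun m : ℕ => b m / (m : ℝ)) atTop (nhds μ1) := hBω
  have hnum : ∀ n : ℕ, (∑ k ∈ Finset.Icc 1 (n / (2 * M)),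
      |(∑ i ∈ Finset.range (2 * k * M), ξ i ω) -
        ∑ i ∈ Finset.range ((2 * k - 2) * M), ξ i ω| ^ p) = a (n / (2 * M)) := by
    intro n
    rw [sum_Icc_one_eq_range]
    apply Finset.sum_congr rfl
    intro j _
    have e1 : (2 * (1 + j) - 2) * M = j * (2 * M) := by
      have h : 2 * (1 + j) - 2 = 2 * j := by omega
      rw [h]; ring
    have e2 : 2 * (1 + j) * M = j * (2 * M) + 2 * M := by ring
    rw [e1, e2, ← Finset.sum_Ico_eq_sub (fun i => ξ i ω) (Nat.le_add_right _ _)]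
  have hden : ∀ n : ℕ, (∑ k ∈ Finset.Icc 1 (n / M),
      |(∑ i ∈ Finset.range (k * M), ξ i ω) -
        ∑ i ∈ Finset.range ((k - 1) * M), ξ i ω| ^ p) = b (n / M) := by
    intro n
    rw [sum_Icc_one_eq_range]
    apply Finset.sum_congr rfl
    intro j _
    have e1 : (1 + j - 1) * M = j * M := by
      have h : 1 + j - 1 = j := by omega
      rw [h]
    have e2 : (1 + j) * M = j * M + M := by ring
    rw [e1, e2, ← Finset.sum_Ico_eq_sub (fun i => ξ i ω) (Nat.le_add_right _ _)]
  have hG : Tendsto (fun m : ℕ => a (m / 2) / b m) atTop (nhds ((2 : ℝ) ^ (p / 2 - 1))) := by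
    have hA2 : Tendsto (fun m : ℕ => a (m / 2) / ((m / 2 : ℕ) : ℝ)) atTop
        (nhds (2 ^ (p / 2) * μ1)) := hAω'.comp (tendsto_nat_div_atTop' 2 (by norm_num))
    have hH : Tendsto (fun m : ℕ => ((a (m / 2) / ((m / 2 : ℕ) : ℝ)) *
        (((m / 2 : ℕ) : ℝ) / (m : ℝ))) / (b m / (m : ℝ))) atTop
        (nhds ((2 ^ (p / 2) * μ1 * (1 / 2)) / μ1)) :=
      (hA2.mul tendsto_nat_half_div).div hBω' hμ1pos.ne'
    have hval : ((2:ℝ) ^ (p / 2) * μ1 * (1 / 2)) / μ1 = (2 : ℝ) ^ (p / 2 - 1) := by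
      rw [Real.rpow_sub (by norm_num : (0:ℝ) < 2), Real.rpow_one]
      field_simp
    rw [hval] at hH
    apply hH.congr'
    filter_upwards [Filter.eventually_ge_atTop 2] with m hm
    have hm0 : (m : ℝ) ≠ 0 := Nat.cast_ne_zero.2 (by omega)
    have hc0 : ((m / 2 : ℕ) : ℝ) ≠ 0 := Nat.cast_ne_zero.2 (by omega)
    rw [div_mul_div_comm, mul_comm (a (m / 2)) (((m / 2 : ℕ) : ℝ)),
      mul_div_mul_left _ _ hc0, div_div_same_cancel _ _ _ hm0]
  have hcomp : ∀ n : ℕ, n / (2 * M) = (n / M) / 2 := fun n => by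
    rw [Nat.div_div_eq_div_mul, mul_comm]
  have hfinal := hG.comp (tendsto_nat_div_atTop' M hM)
  refine Tendsto.congr (fun n => ?_) hfinal
  show a ((n / M) / 2) / b (n / M) = _
  rw [← hcomp n, hnum n, hden n]
end

section
/- Let (ξ_i)_{i≥1} be an i.i.d. sequence of centered real Gaussian random variables with variance v > 0, and for each n let Y^n(k/n) := n^{−1/2}(ξ_1+…+ξ_k) + J(k/n) for k = 0,…,n, where J is the jump part with jump sizes c_1,…,c_r and distinct jump times τ_1,…,τ_r ∈ (0,1). Then almost surely lim_{n→∞} ∑_{k=1}^{n} (Y^n(k/n) − Y^n((k−1)/n))² = v + ∑_{m=1}^{r} c_m², i.e. the 2-variation converges to the integrated squared diffusion coefficient plus the sum of squared jumps. -/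
open Finset Filter MeasureTheory ProbabilityTheory

open Real Topology



lemma aux_sum_Icc_pred {M : Type*} [AddCommMonoid M] (f : ℕ → M) (n : ℕ) :
    ∑ k ∈ Finset.Icc 1 n, f (k - 1) = ∑ i ∈ Finset.range n, f i := by
  induction n with
  | zero => simp
  | succ n ih => rw [Finset.sum_Icc_succ_top (by omega), ih, Finset.sum_range_succ]; simp

lemma aux_ind_diff {t x : ℝ} (ht0 : 0 < t) (ht1 : t < 1) {n k : ℕ} (hn : 1 ≤ n) (hk : 1 ≤ k) :
    ((if t ≤ (k : ℝ) / n then x else 0) - if t ≤ ((k - 1 : ℕ) : ℝ) / n then x else 0) =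
      if ⌈(n : ℝ) * t⌉₊ = k then x else 0 := by
  have hnpos : (0 : ℝ) < n := by exact_mod_cast hn
  have hA : ∀ j : ℕ, (t ≤ (j : ℝ) / n ↔ ⌈(n : ℝ) * t⌉₊ ≤ j) := by
    intro j
    rw [Nat.ceil_le, le_div_iff₀ hnpos, mul_comm]
  have hκ1 : 1 ≤ ⌈(n : ℝ) * t⌉₊ := Nat.one_le_iff_ne_zero.mpr (by
    have : 0 < ⌈(n : ℝ) * t⌉₊ := Nat.ceil_pos.mpr (by positivity)
    omega)
  simp only [hA]
  have hcast : ((k - 1 : ℕ) : ℝ) = (k : ℝ) - 1 := by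
    push_cast [Nat.cast_sub hk]; ring
  split_ifs <;> (try ring) <;> (exfalso; omega)


lemma aux_ibp {b : ℝ} (hb : 0 < b) :
    ∫ x : ℝ, x ^ 2 * rexp (-b * x ^ 2) = (2 * b)⁻¹ * Real.sqrt (π / b) := by
  have hu : ∀ x : ℝ, HasDerivAt (fun y : ℝ => y) 1 x := fun x => hasDerivAt_id x
  have hv : ∀ x : ℝ, HasDerivAt (fun y : ℝ => -(2 * b)⁻¹ * rexp (-b * y ^ 2))
      (x * rexp (-b * x ^ 2)) x := by
    intro x
    have h1 : HasDerivAt (fun y : ℝ => -b * y ^ 2) (-b * (2 * x)) x := by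
      simpa using ((hasDerivAt_pow 2 x).const_mul (-b))
    have h2 := (h1.exp).const_mul (-(2 * b)⁻¹)
    have hbb : b * b⁻¹ = 1 := mul_inv_cancel₀ hb.ne'
    refine h2.congr_deriv ?_
    linear_combination (x * rexp (-b * x ^ 2)) * hbb
  have hint2 : Integrable (fun x : ℝ => x ^ 2 * rexp (-b * x ^ 2)) := by
    have := integrable_rpow_mul_exp_neg_mul_sq hb (s := 2) (by norm_num)
    simpa [Real.rpow_natCast (n := 2)] using this
  have huv' : Integrable ((fun y : ℝ => y) * fun x => x * rexp (-b * x ^ 2)) := by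
    have e : ((fun y : ℝ => y) * fun x => x * rexp (-b * x ^ 2))
        = fun x => x ^ 2 * rexp (-b * x ^ 2) := by ext x; simp [Pi.mul_apply]; ring
    rw [e]; exact hint2
  have hu'v : Integrable ((fun _ : ℝ => (1:ℝ)) * fun y : ℝ => -(2 * b)⁻¹ * rexp (-b * y ^ 2)) := by
    simpa [Pi.mul_def] using ((integrable_exp_neg_mul_sq hb).const_mul (-(2 * b)⁻¹))
  have huv : Integrable ((fun y : ℝ => y) * fun y : ℝ => -(2 * b)⁻¹ * rexp (-b * y ^ 2)) := by
    have := (integrable_mul_exp_neg_mul_sq hb).const_mul (-(2 * b)⁻¹)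
    simpa [Pi.mul_def, mul_comm, mul_left_comm] using this
  have key := integral_mul_deriv_eq_deriv_mul_of_integrable (fun x _ => hu x) (fun x _ => hv x) huv' hu'v huv
  have e1 : ∫ x : ℝ, x * (x * rexp (-b * x ^ 2)) = ∫ x : ℝ, x ^ 2 * rexp (-b * x ^ 2) := by
    congr 1; ext x; ring
  have e2 : ∫ x : ℝ, (1 : ℝ) * (-(2 * b)⁻¹ * rexp (-b * x ^ 2))
      = -(2 * b)⁻¹ * Real.sqrt (π / b) := by
    simp only [one_mul]
    rw [MeasureTheory.integral_const_mul, integral_gaussian]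
  rw [e1, e2] at key
  rw [key]; ring

lemma aux_pdf_eq {v : NNReal} (hv : v ≠ 0) (x : ℝ) :
    gaussianPDFReal 0 v x = (Real.sqrt (2 * π * v))⁻¹ * rexp (-(2 * (v:ℝ))⁻¹ * x ^ 2) := by
  have hv0 : (0:ℝ) < v := by positivity
  rw [gaussianPDFReal]
  congr 1
  congr 1
  field_simp
  ring

lemma aux_pdf_meas (v : NNReal) : Measurable fun x => (gaussianPDFReal 0 v x).toNNReal :=
  (measurable_gaussianPDFReal 0 v).real_toNNReal

lemma aux_gauss_wd {v : NNReal} (hv : v ≠ 0) :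
    gaussianReal 0 v = volume.withDensity fun x => ((gaussianPDFReal 0 v x).toNNReal : ENNReal) := by
  rw [gaussianReal_of_var_ne_zero _ hv]
  rfl

lemma aux_sq_integrable {v : NNReal} (hv : v ≠ 0) :
    Integrable (fun x : ℝ => x ^ 2) (gaussianReal 0 v) := by
  have hv0 : (0:ℝ) < v := by positivity
  have hb : (0:ℝ) < (2 * (v:ℝ))⁻¹ := by positivity
  rw [aux_gauss_wd hv, integrable_withDensity_iff_integrable_smul (aux_pdf_meas v)]
  have e : (fun x : ℝ => (gaussianPDFReal 0 v x).toNNReal • x ^ 2)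
      = fun x : ℝ => (Real.sqrt (2 * π * v))⁻¹ * (x ^ 2 * rexp (-(2 * (v:ℝ))⁻¹ * x ^ 2)) := by
    ext x
    rw [NNReal.smul_def, smul_eq_mul, Real.coe_toNNReal _ (gaussianPDFReal_nonneg 0 v x),
      aux_pdf_eq hv]
    ring
  rw [e]
  have hint2 : Integrable (fun x : ℝ => x ^ 2 * rexp (-(2 * (v:ℝ))⁻¹ * x ^ 2)) := by
    have := integrable_rpow_mul_exp_neg_mul_sq hb (s := 2) (by norm_num)
    simpa [Real.rpow_natCast (n := 2)] using this
  exact hint2.const_mul _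

lemma aux_sq_integral {v : NNReal} (hv : v ≠ 0) :
    ∫ x, x ^ 2 ∂(gaussianReal 0 v) = (v : ℝ) := by
  have hv0 : (0:ℝ) < v := by positivity
  have hb : (0:ℝ) < (2 * (v:ℝ))⁻¹ := by positivity
  rw [aux_gauss_wd hv, integral_withDensity_eq_integral_smul (aux_pdf_meas v)]
  have e : (fun x : ℝ => (gaussianPDFReal 0 v x).toNNReal • x ^ 2)
      = fun x : ℝ => (Real.sqrt (2 * π * v))⁻¹ * (x ^ 2 * rexp (-(2 * (v:ℝ))⁻¹ * x ^ 2)) := by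
    ext x
    rw [NNReal.smul_def, smul_eq_mul, Real.coe_toNNReal _ (gaussianPDFReal_nonneg 0 v x),
      aux_pdf_eq hv]
    ring
  rw [e, MeasureTheory.integral_const_mul, aux_ibp hb]
  have h1 : (2 * (2 * (v:ℝ))⁻¹)⁻¹ = (v:ℝ) := by field_simp
  have h2 : π / (2 * (v:ℝ))⁻¹ = 2 * π * v := by field_simp
  rw [h1, h2]
  have hs : Real.sqrt (2 * π * v) ≠ 0 := by
    refine ne_of_gt (Real.sqrt_pos.mpr ?_)
    have := pi_pos
    positivity
  field_simp


lemma aux_slln {Ω : Type*} [MeasureSpace Ω] [IsProbabilityMeasure (ℙ : Measure Ω)]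
    (ξ : ℕ → Ω → ℝ) (v : NNReal) (hv : 0 < v)
    (hmeas : ∀ i, Measurable (ξ i))
    (hindep : iIndepFun ξ ℙ)
    (hdist : ∀ i, Measure.map (ξ i) ℙ = gaussianReal 0 v) :
    ∀ᵐ ω ∂ℙ, Tendsto (fun n : ℕ => (∑ i ∈ Finset.range n, ξ i ω ^ 2) / n)
      atTop (𝓝 (v : ℝ)) := by
  have hv' : v ≠ 0 := hv.ne'
  have hsq : Measurable fun x : ℝ => x ^ 2 := measurable_id.pow_const 2
  have hint : Integrable (fun ω => ξ 0 ω ^ 2) ℙ := by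
    have := (integrable_map_measure (μ := (ℙ : Measure Ω)) (f := ξ 0)
      (g := fun x : ℝ => x ^ 2) (hsq.aestronglyMeasurable) (hmeas 0).aemeasurable).mp
    rw [hdist 0] at this
    exact this (aux_sq_integrable hv')
  have hpind : Pairwise (Function.onFun (IndepFun · · (ℙ : Measure Ω)) fun i ω => ξ i ω ^ 2) := by
    intro i j hij
    exact (hindep.indepFun hij).comp hsq hsq
  have hident : ∀ i, IdentDistrib (fun ω => ξ i ω ^ 2) (fun ω => ξ 0 ω ^ 2) ℙ ℙ := by
    intro i
    have h0 : IdentDistrib (ξ i) (ξ 0) ℙ ℙ :=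
      ⟨(hmeas i).aemeasurable, (hmeas 0).aemeasurable, by rw [hdist i, hdist 0]⟩
    exact h0.comp hsq
  have hE : (∫ ω, ξ 0 ω ^ 2 ∂ℙ) = (v : ℝ) := by
    rw [← integral_map (hmeas 0).aemeasurable hsq.aestronglyMeasurable, hdist 0,
      aux_sq_integral hv']
  have := strong_law_ae_real (fun i ω => ξ i ω ^ 2) hint hpind hident
  rw [hE] at this
  exact this


lemma aux_q_tendsto (g : ℕ → ℝ) (v : ℝ)
    (hg : Tendsto (fun n : ℕ => (∑ i ∈ Finset.range n, g i) / n) atTop (𝓝 v)) :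
    Tendsto (fun j : ℕ => g j / ((j : ℝ) + 1)) atTop (𝓝 0) := by
  set A : ℕ → ℝ := fun n => (∑ i ∈ Finset.range n, g i) / n with hA
  have key : ∀ j : ℕ, g j / ((j : ℝ) + 1) = A (j + 1) - ((j : ℝ) / ((j : ℝ) + 1)) * A j := by
    intro j
    rcases Nat.eq_zero_or_pos j with h | h
    · subst h; simp [hA]
    · have hj : ((j : ℝ)) ≠ 0 := by positivity
      have hj1 : ((j : ℝ)) + 1 ≠ 0 := by positivity
      simp only [hA, Finset.sum_range_succ, Nat.cast_add, Nat.cast_one]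
      field_simp
      ring
  have l1 : Tendsto (fun j : ℕ => A (j + 1)) atTop (𝓝 v) := hg.comp (tendsto_add_atTop_nat 1)
  have l2 : Tendsto (fun j : ℕ => (j : ℝ) / ((j : ℝ) + 1)) atTop (𝓝 1) := by
    simpa using tendsto_natCast_div_add_atTop (𝕜 := ℝ) 1
  have := l1.sub (l2.mul hg)
  rw [show v - 1 * v = 0 by ring] at this
  exact this.congr fun j => (key j).symm


lemma aux_rpow_sq {n : ℕ} (hn : 1 ≤ n) : ((n : ℝ) ^ (-(1:ℝ)/2)) ^ 2 = ((n : ℝ))⁻¹ := by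
  rw [← Real.rpow_natCast ((n:ℝ) ^ (-(1:ℝ)/2)) 2, ← Real.rpow_mul (Nat.cast_nonneg n)]
  norm_num [Real.rpow_neg_one]

lemma aux_det (g : ℕ → ℝ) (v : ℝ)
    (hg : Tendsto (fun n : ℕ => (∑ i ∈ Finset.range n, g i ^ 2) / n) atTop (𝓝 v))
    (r : ℕ) (c τ : Fin r → ℝ) (hτinj : Function.Injective τ)
    (hτmem : ∀ m, τ m ∈ Set.Ioo (0 : ℝ) 1) :
    Tendsto (fun n : ℕ => ∑ k ∈ Finset.Icc 1 n,
        ((n : ℝ) ^ (-(1:ℝ)/2) * g (k - 1) +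
          ∑ m, (if ⌈(n : ℝ) * τ m⌉₊ = k then c m else 0)) ^ 2)
      atTop (𝓝 (v + ∑ m, c m ^ 2)) := by
  set κ : Fin r → ℕ → ℕ := fun m n => ⌈(n : ℝ) * τ m⌉₊ with hκdef
  have hκ1 : ∀ (m) (n : ℕ), 1 ≤ n → 1 ≤ κ m n := by
    intro m n hn
    have : (0:ℝ) < (n:ℝ) * τ m := by
      have := (hτmem m).1
      have hn' : (0:ℝ) < n := by exact_mod_cast hn
      positivity
    simp only [hκdef]
    exact Nat.ceil_pos.mpr this
  have hκn : ∀ (m) (n : ℕ), κ m n ≤ n := by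
    intro m n
    refine Nat.ceil_le.mpr ?_
    calc (n:ℝ) * τ m ≤ (n:ℝ) * 1 := by
          refine mul_le_mul_of_nonneg_left (hτmem m).2.le (Nat.cast_nonneg n)
      _ = (n:ℝ) := by ring
  have hκtop : ∀ m, Tendsto (fun n => κ m n) atTop atTop := by
    intro m
    rw [tendsto_atTop]
    intro b
    have hev : ∀ᶠ n : ℕ in atTop, (b:ℝ) ≤ (n:ℝ) * τ m :=
      (tendsto_natCast_atTop_atTop.atTop_mul_const (hτmem m).1).eventually_ge_atTop (b:ℝ)
    filter_upwards [hev] with n hn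
    have : (b:ℝ) ≤ (⌈(n:ℝ) * τ m⌉₊ : ℝ) := hn.trans (Nat.le_ceil _)
    exact_mod_cast this
  have hκlt : ∀ m m' : Fin r, τ m < τ m' → ∀ᶠ n : ℕ in atTop, κ m n < κ m' n := by
    intro m m' hlt
    have hpos : (0:ℝ) < τ m' - τ m := by linarith
    have hev : ∀ᶠ n : ℕ in atTop, (1:ℝ) ≤ (n:ℝ) * (τ m' - τ m) :=
      (tendsto_natCast_atTop_atTop.atTop_mul_const hpos).eventually_ge_atTop 1
    filter_upwards [hev] with n h1
    have hnn : (0:ℝ) ≤ (n:ℝ) * τ m := by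
      have := (hτmem m).1.le; positivity
    have a1 : ((κ m n : ℕ) : ℝ) < (n:ℝ) * τ m + 1 := Nat.ceil_lt_add_one hnn
    have a2 : (n:ℝ) * τ m' ≤ ((κ m' n : ℕ) : ℝ) := Nat.le_ceil _
    have : ((κ m n : ℕ) : ℝ) < ((κ m' n : ℕ) : ℝ) := by nlinarith
    exact_mod_cast this
  have hinj_ev : ∀ᶠ n : ℕ in atTop, ∀ m m' : Fin r, κ m n = κ m' n → m = m' := by
    have hpair : ∀ p : Fin r × Fin r, ∀ᶠ n : ℕ in atTop,
        p.1 ≠ p.2 → κ p.1 n ≠ κ p.2 n := by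
      intro p
      by_cases hp : p.1 = p.2
      · exact Eventually.of_forall fun n h => absurd hp h
      · have hτne : τ p.1 ≠ τ p.2 := fun h => hp (hτinj h)
        rcases lt_or_gt_of_ne hτne with h | h
        · exact (hκlt p.1 p.2 h).mono fun n hn _ => hn.ne
        · exact (hκlt p.2 p.1 h).mono fun n hn _ => hn.ne'
    have := eventually_all.mpr hpair
    filter_upwards [this] with n h m m' heq
    by_contra hne
    exact h (m, m') hne heq
  -- cross term limits
  have hq := aux_q_tendsto (fun i => g i ^ 2) v hg
  have hcross : ∀ m, Tendsto (fun n : ℕ => (n:ℝ) ^ (-(1:ℝ)/2) * g (κ m n - 1))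
      atTop (𝓝 0) := by
    intro m
    have h1' : Tendsto (fun n => κ m n - 1) atTop atTop :=
      (tendsto_sub_atTop_nat 1).comp (hκtop m)
    have h2 : Tendsto (fun n : ℕ => g (κ m n - 1) ^ 2 / (((κ m n - 1 : ℕ) : ℝ) + 1))
        atTop (𝓝 0) := hq.comp h1'
    have h3 : Tendsto (fun n : ℕ =>
        Real.sqrt (g (κ m n - 1) ^ 2 / (((κ m n - 1 : ℕ) : ℝ) + 1))) atTop (𝓝 0) := by
      have := (Real.continuous_sqrt.tendsto 0).comp h2
      simpa using (show Tendsto (fun n : ℕ =>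
        Real.sqrt (g (κ m n - 1) ^ 2 / (((κ m n - 1 : ℕ) : ℝ) + 1))) atTop (𝓝 (Real.sqrt 0)) from this)
    refine squeeze_zero_norm' ?_ h3
    filter_upwards [eventually_ge_atTop 1] with n hn
    have hκ1' : 1 ≤ κ m n := hκ1 m n hn
    have hκn' : κ m n ≤ n := hκn m n
    have hcast : ((κ m n - 1 : ℕ) : ℝ) + 1 = (κ m n : ℝ) := by
      push_cast [Nat.cast_sub hκ1']; ring
    rw [Real.norm_eq_abs, ← Real.sqrt_sq_eq_abs]
    refine Real.sqrt_le_sqrt ?_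
    rw [mul_pow, aux_rpow_sq hn, hcast]
    have hG : (0:ℝ) ≤ g (κ m n - 1) ^ 2 := sq_nonneg _
    have hκpos : (0:ℝ) < (κ m n : ℝ) := by exact_mod_cast hκ1'
    have hle : (κ m n : ℝ) ≤ (n : ℝ) := by exact_mod_cast hκn'
    calc ((n:ℝ))⁻¹ * g (κ m n - 1) ^ 2 = g (κ m n - 1) ^ 2 / (n:ℝ) := by ring
      _ ≤ g (κ m n - 1) ^ 2 / (κ m n : ℝ) := div_le_div_of_nonneg_left hG hκpos hle
  -- the limit of the grouped expression
  have hC : Tendsto (fun n : ℕ => ∑ m, 2 * c m * ((n:ℝ) ^ (-(1:ℝ)/2) * g (κ m n - 1)))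
      atTop (𝓝 0) := by
    have := tendsto_finset_sum Finset.univ
      (fun m (_ : m ∈ Finset.univ) => ((hcross m).const_mul (2 * c m)))
    simpa using this
  have hF : Tendsto (fun n : ℕ => (∑ i ∈ Finset.range n, g i ^ 2) / n
      + ((∑ m, 2 * c m * ((n:ℝ) ^ (-(1:ℝ)/2) * g (κ m n - 1))) + ∑ m, c m ^ 2))
      atTop (𝓝 (v + (0 + ∑ m, c m ^ 2))) :=
    hg.add (hC.add tendsto_const_nhds)
  rw [show v + (0 + ∑ m, c m ^ 2) = v + ∑ m, c m ^ 2 by ring] at hF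
  refine Tendsto.congr' ?_ hF
  filter_upwards [eventually_ge_atTop 1, hinj_ev] with n hn hinjn
  -- now prove the algebraic identity for this fixed n
  have T1 : ∑ k ∈ Finset.Icc 1 n, ((n:ℝ) ^ (-(1:ℝ)/2) * g (k - 1)) ^ 2
      = (∑ i ∈ Finset.range n, g i ^ 2) / n := by
    have e : ∀ k ∈ Finset.Icc 1 n, ((n:ℝ) ^ (-(1:ℝ)/2) * g (k - 1)) ^ 2
        = ((n:ℝ))⁻¹ * g (k - 1) ^ 2 := by
      intro k _; rw [mul_pow, aux_rpow_sq hn]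
    rw [Finset.sum_congr rfl e, ← Finset.mul_sum,
      aux_sum_Icc_pred (fun i => g i ^ 2) n, inv_mul_eq_div]
  have T2 : ∑ k ∈ Finset.Icc 1 n,
      (2 * ((n:ℝ) ^ (-(1:ℝ)/2) * g (k - 1)) * ∑ m, (if κ m n = k then c m else 0))
      = ∑ m, 2 * c m * ((n:ℝ) ^ (-(1:ℝ)/2) * g (κ m n - 1)) := by
    have e1 : ∀ k ∈ Finset.Icc 1 n,
        2 * ((n:ℝ) ^ (-(1:ℝ)/2) * g (k - 1)) * ∑ m, (if κ m n = k then c m else 0)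
        = ∑ m, (if κ m n = k then 2 * ((n:ℝ) ^ (-(1:ℝ)/2) * g (k - 1)) * c m else 0) := by
      intro k _
      rw [Finset.mul_sum]
      exact Finset.sum_congr rfl fun m _ => by rw [mul_ite, mul_zero]
    rw [Finset.sum_congr rfl e1, Finset.sum_comm]
    refine Finset.sum_congr rfl fun m _ => ?_
    rw [Finset.sum_ite_eq, if_pos (Finset.mem_Icc.mpr ⟨hκ1 m n hn, hκn m n⟩)]
    ring
  have T3 : ∑ k ∈ Finset.Icc 1 n, (∑ m, (if κ m n = k then c m else 0)) ^ 2
      = ∑ m, c m ^ 2 := by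
    have hb : ∀ k, (∑ m, (if κ m n = k then c m else 0)) ^ 2
        = ∑ m, (if κ m n = k then c m ^ 2 else 0) := by
      intro k
      by_cases hex : ∃ m, κ m n = k
      · obtain ⟨m₀, hm₀⟩ := hex
        have h1 : (∑ m, (if κ m n = k then c m else 0)) = c m₀ := by
          rw [Finset.sum_eq_single m₀]
          · rw [if_pos hm₀]
          · intro m _ hm
            exact if_neg fun h => hm (hinjn m m₀ (h.trans hm₀.symm))
          · intro h; exact absurd (Finset.mem_univ m₀) h
        have h2 : (∑ m, (if κ m n = k then c m ^ 2 else 0)) = c m₀ ^ 2 := by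
          rw [Finset.sum_eq_single m₀]
          · rw [if_pos hm₀]
          · intro m _ hm
            exact if_neg fun h => hm (hinjn m m₀ (h.trans hm₀.symm))
          · intro h; exact absurd (Finset.mem_univ m₀) h
        rw [h1, h2]
      · push_neg at hex
        rw [Finset.sum_eq_zero fun m _ => if_neg (hex m),
          Finset.sum_eq_zero fun m _ => if_neg (hex m)]
        norm_num
    rw [Finset.sum_congr rfl fun k _ => hb k, Finset.sum_comm]
    refine Finset.sum_congr rfl fun m _ => ?_
    rw [Finset.sum_ite_eq, if_pos (Finset.mem_Icc.mpr ⟨hκ1 m n hn, hκn m n⟩)]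
  calc (∑ i ∈ Finset.range n, g i ^ 2) / n
        + ((∑ m, 2 * c m * ((n:ℝ) ^ (-(1:ℝ)/2) * g (κ m n - 1))) + ∑ m, c m ^ 2)
      = (∑ k ∈ Finset.Icc 1 n, ((n:ℝ) ^ (-(1:ℝ)/2) * g (k - 1)) ^ 2)
        + ((∑ k ∈ Finset.Icc 1 n,
            2 * ((n:ℝ) ^ (-(1:ℝ)/2) * g (k - 1)) * ∑ m, (if κ m n = k then c m else 0))
          + ∑ k ∈ Finset.Icc 1 n, (∑ m, (if κ m n = k then c m else 0)) ^ 2) := by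
        rw [T1, T2, T3]
    _ = ∑ k ∈ Finset.Icc 1 n,
          (((n:ℝ) ^ (-(1:ℝ)/2) * g (k - 1)) ^ 2
            + (2 * ((n:ℝ) ^ (-(1:ℝ)/2) * g (k - 1)) * (∑ m, (if κ m n = k then c m else 0))
              + (∑ m, (if κ m n = k then c m else 0)) ^ 2)) := by
        rw [Finset.sum_add_distrib, Finset.sum_add_distrib]
    _ = ∑ k ∈ Finset.Icc 1 n,
          ((n:ℝ) ^ (-(1:ℝ)/2) * g (k - 1) + ∑ m, (if κ m n = k then c m else 0)) ^ 2 := by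
        exact Finset.sum_congr rfl fun k _ => by ring



/-- Let `(ξ i)` be i.i.d. centered Gaussians with variance `v > 0`, and for each `n`
let `Y n k = n^{-1/2}(ξ 1 + … + ξ k) + J(k/n)` where `J = ∑_m c_m · 1_{[τ_m,∞)}`
has distinct jump times `τ_m ∈ (0,1)`. Then almost surely
`∑_{k=1}^n (Y n k − Y n (k−1))² → v + ∑_m c_m²` as `n → ∞`: the 2-variation
converges to the integrated squared diffusion coefficient plus the sum of squared
jumps. -/
theorem rescaled_walk_plus_jumps_quadratic_variation
    {Ω : Type*} [MeasureSpace Ω] [IsProbabilityMeasure (ℙ : Measure Ω)]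
    (ξ : ℕ → Ω → ℝ) (v : NNReal) (hv : 0 < v)
    (hmeas : ∀ i, Measurable (ξ i))
    (hindep : iIndepFun ξ ℙ)
    (hdist : ∀ i, Measure.map (ξ i) ℙ = gaussianReal 0 v)
    (r : ℕ) (c τ : Fin r → ℝ) (hτinj : Function.Injective τ)
    (hτmem : ∀ m, τ m ∈ Set.Ioo (0 : ℝ) 1)
    (Y : ℕ → ℕ → Ω → ℝ)
    (hY : ∀ n k ω, Y n k ω =
      (n : ℝ) ^ (-(1 : ℝ) / 2) * (∑ i ∈ Finset.range k, ξ i ω) +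
        ∑ m, if τ m ≤ (k : ℝ) / n then c m else 0) :
    ∀ᵐ ω ∂ℙ, Tendsto (fun n : ℕ =>
        ∑ k ∈ Finset.Icc 1 n, (Y n k ω - Y n (k - 1) ω) ^ 2)
      atTop (nhds ((v : ℝ) + ∑ m, (c m) ^ 2)) := by
  filter_upwards [aux_slln ξ v hv hmeas hindep hdist] with ω hω
  have hdet := aux_det (fun i => ξ i ω) (v : ℝ) hω r c τ hτinj hτmem
  have hdiff : ∀ n : ℕ, 1 ≤ n → ∀ k ∈ Finset.Icc 1 n,
      Y n k ω - Y n (k - 1) ω = (n : ℝ) ^ (-(1:ℝ)/2) * ξ (k - 1) ω +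
        ∑ m, (if ⌈(n : ℝ) * τ m⌉₊ = k then c m else 0) := by
    intro n hn k hk
    obtain ⟨hk1, hkn⟩ := Finset.mem_Icc.mp hk
    rw [hY, hY]
    have hsum : ∑ i ∈ Finset.range k, ξ i ω
        = (∑ i ∈ Finset.range (k - 1), ξ i ω) + ξ (k - 1) ω := by
      conv_lhs => rw [show k = (k - 1) + 1 by omega]
      rw [Finset.sum_range_succ]
    have h3 : ∑ m, (if ⌈(n : ℝ) * τ m⌉₊ = k then c m else 0)
        = ∑ m, ((if τ m ≤ (k : ℝ) / n then c m else 0)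
            - if τ m ≤ ((k - 1 : ℕ) : ℝ) / n then c m else 0) :=
      Finset.sum_congr rfl fun m _ =>
        (aux_ind_diff (hτmem m).1 (hτmem m).2 hn hk1).symm
    rw [h3, Finset.sum_sub_distrib, hsum]
    ring
  refine Tendsto.congr' ?_ hdet
  filter_upwards [eventually_ge_atTop 1] with n hn
  refine Finset.sum_congr rfl fun k hk => ?_
  rw [hdiff n hn k hk]
end

section
/- Let f : ℝ → ℝ be γ-Hölder on [0,T] with constant C > 0 (γ ∈ (0,1], T > 0), let p > 0 satisfy pγ > 1, let X := f + J where J is the jump part with jump sizes c_1,…,c_r and distinct jump times τ_1,…,τ_r ∈ (0,T), and fix a truncation factor Γ > 0. Then the truncated δ-step p-variation with threshold 3Γ√δ vanishes in the limit: lim_{δ→0+} ∑_{k=1}^{⌊T/δ⌋} |X(kδ) − X((k−1)δ)|^p · 1{|X(kδ) − X((k−1)δ)| ≤ 3Γ√δ} = 0; i.e. for small step sizes the fixed-Γ truncation removes every increment containing a nonzero jump, and the remaining continuous-part increments contribute nothing in the limit. -/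
open Finset Filter

theorem aux_rpow_tendsto (a : ℝ) (ha : 0 < a) :
    Tendsto (fun δ : ℝ => δ ^ a) (nhdsWithin 0 (Set.Ioi 0)) (nhds 0) := by
  have h := (Real.continuousAt_rpow_const 0 a (Or.inr ha.le)).tendsto
  rw [Real.zero_rpow ha.ne'] at h
  exact h.mono_left nhdsWithin_le_nhds

/-- If `f` is `γ`-Hölder on `[0,T]` with constant `C > 0`, `pγ > 1`,
`X = f + J` where `J = ∑_m c_m · 1_{[τ_m,∞)}` is a jump part with distinct jump
times `τ_m ∈ (0,T)`, and `Γ > 0` is a fixed truncation factor, then the truncated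
`δ`-step `p`-variation with threshold `3Γ√δ` vanishes in the limit `δ → 0+`:
for small step sizes the fixed-`Γ` truncation removes every increment containing a
nonzero jump, and the remaining continuous-part increments contribute nothing. -/
theorem truncated_pvariation_of_holder_plus_jumps_vanishes
    (f : ℝ → ℝ) (γ C T p Γ : ℝ) (hγ0 : 0 < γ) (hγ1 : γ ≤ 1) (hC : 0 < C)
    (hT : 0 < T) (hp : 0 < p) (hpγ : 1 < p * γ) (hΓ : 0 < Γ)
    (hf : ∀ s ∈ Set.Icc (0 : ℝ) T, ∀ t ∈ Set.Icc (0 : ℝ) T,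
      |f s - f t| ≤ C * |s - t| ^ γ)
    (r : ℕ) (c τ : Fin r → ℝ) (hτinj : Function.Injective τ)
    (hτmem : ∀ m, τ m ∈ Set.Ioo (0 : ℝ) T)
    (X : ℝ → ℝ) (hX : X = fun t => f t + ∑ m, if τ m ≤ t then c m else 0) :
    Tendsto (fun δ : ℝ => ∑ k ∈ Finset.Icc 1 ⌊T / δ⌋₊,
        if |X ((k : ℝ) * δ) - X (((k : ℝ) - 1) * δ)| ≤ 3 * Γ * Real.sqrt δ then
          |X ((k : ℝ) * δ) - X (((k : ℝ) - 1) * δ)| ^ p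
        else 0)
      (nhdsWithin 0 (Set.Ioi 0)) (nhds 0) := by
  classical
  subst hX
  -- the dominating function
  have hg : Tendsto (fun δ : ℝ => T * C ^ p * δ ^ (p * γ - 1)
      + (r : ℝ) * (3 * Γ) ^ p * δ ^ (p / 2))
      (nhdsWithin 0 (Set.Ioi 0)) (nhds 0) := by
    have h1 := (aux_rpow_tendsto (p * γ - 1) (by linarith)).const_mul (T * C ^ p)
    have h2 := (aux_rpow_tendsto (p / 2) (by positivity)).const_mul ((r : ℝ) * (3 * Γ) ^ p)
    simpa using h1.add h2
  refine squeeze_zero' ?_ ?_ hg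
  · filter_upwards with δ
    refine Finset.sum_nonneg fun k _ => ?_
    split
    · positivity
    · exact le_rfl
  · filter_upwards [self_mem_nhdsWithin] with δ (hδ : (0:ℝ) < δ)
    set N := ⌊T / δ⌋₊ with hN
    set Bad : ℕ → Prop := fun k => ∃ m, ((k : ℝ) - 1) * δ < τ m ∧ τ m ≤ (k : ℝ) * δ with hBad
    have hδ2 : Real.sqrt δ = δ ^ ((1:ℝ)/2) := Real.sqrt_eq_rpow δ
    -- termwise bound
    have key : ∀ k ∈ Finset.Icc 1 N,
        (if |(fun t => f t + ∑ m, if τ m ≤ t then c m else 0) ((k : ℝ) * δ)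
              - (fun t => f t + ∑ m, if τ m ≤ t then c m else 0) (((k : ℝ) - 1) * δ)|
            ≤ 3 * Γ * Real.sqrt δ then
          |(fun t => f t + ∑ m, if τ m ≤ t then c m else 0) ((k : ℝ) * δ)
              - (fun t => f t + ∑ m, if τ m ≤ t then c m else 0) (((k : ℝ) - 1) * δ)| ^ p
        else 0)
        ≤ C ^ p * δ ^ (p * γ) + (if Bad k then (3 * Γ) ^ p * δ ^ (p / 2) else 0) := by
      intro k hk
      simp only [Finset.mem_Icc] at hk
      have hk1 : (1 : ℝ) ≤ (k : ℝ) := by exact_mod_cast hk.1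
      have hb : (k : ℝ) * δ ≤ T := by
        have h1 : (N : ℝ) ≤ T / δ := Nat.floor_le (by positivity)
        have h2 : (k : ℝ) ≤ (N : ℝ) := by exact_mod_cast hk.2
        calc (k : ℝ) * δ ≤ (T / δ) * δ := by
              apply mul_le_mul_of_nonneg_right (h2.trans h1) hδ.le
          _ = T := by field_simp
      have ha0 : 0 ≤ ((k : ℝ) - 1) * δ := by nlinarith
      have hab : ((k : ℝ) - 1) * δ ≤ (k : ℝ) * δ := by nlinarith
      by_cases hbad : Bad k
      · rw [if_pos hbad]
        have hbound : (if |(fun t => f t + ∑ m, if τ m ≤ t then c m else 0) ((k : ℝ) * δ)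
              - (fun t => f t + ∑ m, if τ m ≤ t then c m else 0) (((k : ℝ) - 1) * δ)|
            ≤ 3 * Γ * Real.sqrt δ then
          |(fun t => f t + ∑ m, if τ m ≤ t then c m else 0) ((k : ℝ) * δ)
              - (fun t => f t + ∑ m, if τ m ≤ t then c m else 0) (((k : ℝ) - 1) * δ)| ^ p
        else 0) ≤ (3 * Γ) ^ p * δ ^ (p / 2) := by
          split
          · rename_i h
            calc _ ≤ (3 * Γ * Real.sqrt δ) ^ p :=
                  Real.rpow_le_rpow (abs_nonneg _) h hp.le
              _ = (3 * Γ) ^ p * δ ^ (p / 2) := by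
                  rw [Real.mul_rpow (by positivity) (Real.sqrt_nonneg δ), hδ2,
                    ← Real.rpow_mul hδ.le]
                  ring_nf
          · positivity
        have : (0:ℝ) ≤ C ^ p * δ ^ (p * γ) := by positivity
        linarith
      · -- no jump in the interval: jump sums cancel
        have hsum : (∑ m, if τ m ≤ (k : ℝ) * δ then c m else 0)
            = ∑ m, if τ m ≤ ((k : ℝ) - 1) * δ then c m else 0 := by
          refine Finset.sum_congr rfl fun m _ => ?_
          by_cases hm : τ m ≤ ((k : ℝ) - 1) * δ
          · rw [if_pos hm, if_pos (hm.trans hab)]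
          · push_neg at hm
            have : ¬ τ m ≤ (k : ℝ) * δ := fun h => hbad ⟨m, hm, h⟩
            rw [if_neg this, if_neg (by push_neg; exact hm)]
        have hinc : |(fun t => f t + ∑ m, if τ m ≤ t then c m else 0) ((k : ℝ) * δ)
              - (fun t => f t + ∑ m, if τ m ≤ t then c m else 0) (((k : ℝ) - 1) * δ)|
            ≤ C * δ ^ γ := by
          simp only []
          rw [hsum]
          have h := hf ((k : ℝ) * δ) ⟨by linarith, hb⟩ (((k : ℝ) - 1) * δ)
            ⟨ha0, hab.trans hb⟩
          have hd : |(k : ℝ) * δ - ((k : ℝ) - 1) * δ| = δ := by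
            rw [show (k : ℝ) * δ - ((k : ℝ) - 1) * δ = δ by ring, abs_of_pos hδ]
          rw [hd] at h
          calc |f ((k : ℝ) * δ) + (∑ m, if τ m ≤ ((k : ℝ) - 1) * δ then c m else 0)
                - (f (((k : ℝ) - 1) * δ) + ∑ m, if τ m ≤ ((k : ℝ) - 1) * δ then c m else 0)|
              = |f ((k : ℝ) * δ) - f (((k : ℝ) - 1) * δ)| := by ring_nf
            _ ≤ C * δ ^ γ := h
        have hbound : (if |(fun t => f t + ∑ m, if τ m ≤ t then c m else 0) ((k : ℝ) * δ)
              - (fun t => f t + ∑ m, if τ m ≤ t then c m else 0) (((k : ℝ) - 1) * δ)|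
            ≤ 3 * Γ * Real.sqrt δ then
          |(fun t => f t + ∑ m, if τ m ≤ t then c m else 0) ((k : ℝ) * δ)
              - (fun t => f t + ∑ m, if τ m ≤ t then c m else 0) (((k : ℝ) - 1) * δ)| ^ p
        else 0) ≤ C ^ p * δ ^ (p * γ) := by
          have heq : (C * δ ^ γ) ^ p = C ^ p * δ ^ (p * γ) := by
            rw [Real.mul_rpow hC.le (by positivity), ← Real.rpow_mul hδ.le]
            ring_nf
          split
          · calc _ ≤ (C * δ ^ γ) ^ p := Real.rpow_le_rpow (abs_nonneg _) hinc hp.le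
              _ = _ := heq
          · positivity
        rw [if_neg hbad, add_zero]
        exact hbound
    -- number of bad intervals is at most r
    have hcard : ((Finset.Icc 1 N).filter Bad).card ≤ r := by
      have hle : ((Finset.Icc 1 N).filter Bad).card ≤ (Finset.univ.image τ).card := by
        apply Finset.card_le_card_of_injOn
          (fun k => if h : Bad k then τ h.choose else 0)
        · intro k hk
          simp only [Finset.coe_filter, Set.mem_setOf_eq] at hk
          simp only [Finset.mem_coe, dif_pos hk.2]
          exact Finset.mem_image_of_mem _ (Finset.mem_univ _)
        · intro k hk k' hk' he
          simp only [Finset.coe_filter, Set.mem_setOf_eq] at hk hk'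
          simp only [] at he
          rw [dif_pos hk.2, dif_pos hk'.2] at he
          have hm := hk.2.choose_spec
          have hm' := hk'.2.choose_spec
          have hmm : hk.2.choose = hk'.2.choose := hτinj he
          rw [hmm] at hm
          set x := τ hk'.2.choose with hx
          by_contra hne
          have disj : ∀ a b : ℕ, a < b → x ≤ (a : ℝ) * δ → ((b : ℝ) - 1) * δ < x → False := by
            intro a b hab hxa hbx
            have : (a : ℝ) ≤ (b : ℝ) - 1 := by
              have : (a : ℝ) + 1 ≤ (b : ℝ) := by exact_mod_cast hab
              linarith
            nlinarith
          rcases Nat.lt_or_ge k k' with h | h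
          · exact disj k k' h hm.2 hm'.1
          · exact disj k' k (lt_of_le_of_ne h (fun e => hne e.symm)) hm'.2 hm.1
      rwa [Finset.card_image_of_injective _ hτinj, Finset.card_univ, Fintype.card_fin] at hle
    calc (∑ k ∈ Finset.Icc 1 N,
        if |(fun t => f t + ∑ m, if τ m ≤ t then c m else 0) ((k : ℝ) * δ)
              - (fun t => f t + ∑ m, if τ m ≤ t then c m else 0) (((k : ℝ) - 1) * δ)|
            ≤ 3 * Γ * Real.sqrt δ then
          |(fun t => f t + ∑ m, if τ m ≤ t then c m else 0) ((k : ℝ) * δ)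
              - (fun t => f t + ∑ m, if τ m ≤ t then c m else 0) (((k : ℝ) - 1) * δ)| ^ p
        else 0)
        ≤ ∑ k ∈ Finset.Icc 1 N,
            (C ^ p * δ ^ (p * γ) + (if Bad k then (3 * Γ) ^ p * δ ^ (p / 2) else 0)) :=
          Finset.sum_le_sum key
      _ = (Finset.Icc 1 N).card * (C ^ p * δ ^ (p * γ))
          + ((Finset.Icc 1 N).filter Bad).card * ((3 * Γ) ^ p * δ ^ (p / 2)) := by
          rw [Finset.sum_add_distrib, Finset.sum_const, ← Finset.sum_filter]
          simp [Finset.sum_const, nsmul_eq_mul]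
      _ ≤ T * C ^ p * δ ^ (p * γ - 1) + (r : ℝ) * (3 * Γ) ^ p * δ ^ (p / 2) := by
          have hc1 : ((Finset.Icc 1 N).card : ℝ) ≤ T / δ := by
            rw [Nat.card_Icc]
            have : (N : ℝ) ≤ T / δ := Nat.floor_le (by positivity)
            calc ((N + 1 - 1 : ℕ) : ℝ) = (N : ℝ) := by simp
              _ ≤ T / δ := this
          have hc2 : (((Finset.Icc 1 N).filter Bad).card : ℝ) ≤ (r : ℝ) := by
            exact_mod_cast hcard
          have hrw : T / δ * (C ^ p * δ ^ (p * γ)) = T * C ^ p * δ ^ (p * γ - 1) := by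
            rw [Real.rpow_sub hδ, Real.rpow_one]
            field_simp
          have h1 : ((Finset.Icc 1 N).card : ℝ) * (C ^ p * δ ^ (p * γ))
              ≤ T * C ^ p * δ ^ (p * γ - 1) := by
            rw [← hrw]
            exact mul_le_mul_of_nonneg_right hc1 (by positivity)
          have h2 : (((Finset.Icc 1 N).filter Bad).card : ℝ) * ((3 * Γ) ^ p * δ ^ (p / 2))
              ≤ (r : ℝ) * (3 * Γ) ^ p * δ ^ (p / 2) := by
            rw [mul_assoc]
            exact mul_le_mul_of_nonneg_right hc2 (by positivity)
          linarith
end
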